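/- Let d = 1, let x_{i,n} ∈ ℝ be real-valued covariates, and let y_{1i,n} ∈ [a, b] be bounded outcomes. Let μ̂_{1,n} be the piecewise-linear solution of the isotonic regression problem min over nondecreasing functions μ : ℝ → [a, b] of (1/n_{1,n})∑_{i : Z_i = 1}(y_{1i,n} − μ(x_{i,n}))². Then the sequence {μ̂_{1,n}} is prediction unbiased, stable, and has typically simple realizations. -/

import Mathlib

open MeasureTheory ProbabilityTheory Filter Finset Real Set
open scoped ENNReal NNReal

noncomputable section

/-- Number of treated units in an assignment vector. -/
def ones {n : ℕ} (z : Fin n → Bool) : ℕ := (Finset.univ.filter fun i => z i = true).card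

/-- Completely randomized design: `Z n` is uniform over the assignment vectors in `{0,1}^n`
with exactly `n1 n` ones. -/
def IsCRD {Ω : Type} [MeasurableSpace Ω] (P : Measure Ω)
    (Z : (n : ℕ) → Ω → Fin n → Bool) (n1 : ℕ → ℕ) : Prop :=
  ∀ n, Measurable (Z n) ∧ P {ω | ones (Z n ω) = n1 n} = 1 ∧
    ∀ v w : Fin n → Bool, ones v = n1 n → ones w = n1 n →
      P {ω | Z n ω = v} = P {ω | Z n ω = w}

/-- Convergence to zero in probability for a sequence of (real-valued) random variables. -/
def TendstoInProb {Ω : Type} [MeasurableSpace Ω] (P : Measure Ω) (f : ℕ → Ω → ℝ) : Prop :=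
  ∀ ε : ℝ, 0 < ε → Tendsto (fun n => P {ω | ε ≤ |f n ω|}) atTop (nhds 0)

/-- Euclidean norm of a vector in `ℝ^d`. -/
def enorm2 {d : ℕ} (v : Fin d → ℝ) : ℝ := Real.sqrt (∑ j, (v j) ^ 2)

/-- Euclidean inner product on `ℝ^d`. -/
def dotp {d : ℕ} (θ v : Fin d → ℝ) : ℝ := ∑ j, θ j * v j

/-- The empirical `L²(Pₙ)` pseudo-distance `‖f - g‖ₙ` between two regression functions,
relative to the design points `x n 1, …, x n n`. -/
def distN {E : Type*} (x : (n : ℕ) → Fin n → E) (n : ℕ) (f g : E → ℝ) : ℝ :=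
  Real.sqrt ((n : ℝ)⁻¹ * ∑ i, (f (x n i) - g (x n i)) ^ 2)

/-- The `s`-covering number of a family `F` under a pseudo-distance `dst`. -/
def coveringNumber {α : Type*} (F : Set α) (dst : α → α → ℝ) (s : ℝ) : ℝ≥0∞ :=
  ⨅ (T : Finset α) (_ : ∀ f ∈ F, ∃ t ∈ T, dst f t ≤ s), (T.card : ℝ≥0∞)

/-- `√(log N)`, valued in `ℝ≥0∞` (it is `⊤` when the covering number is infinite). -/
def sqrtLog (N : ℝ≥0∞) : ℝ≥0∞ :=
  if N = ⊤ then ⊤ else ENNReal.ofReal (Real.sqrt (Real.log N.toReal))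

namespace IsoAux

lemma quad_aux (A B : ℝ) (h : ∀ t : ℝ, 0 < t → t ≤ 1 → 2 * B ≤ t * A) : B ≤ 0 := by
  by_contra hB
  push_neg at hB
  have hA : 2 * B ≤ A := by simpa using h 1 one_pos le_rfl
  have hApos : 0 < A := by linarith
  have ht : 0 < B / A := div_pos hB hApos
  have ht1 : B / A ≤ 1 := by rw [div_le_one hApos]; linarith
  have h2 := h (B / A) ht ht1
  rw [div_mul_eq_mul_div, mul_div_assoc, div_self hApos.ne', mul_one] at h2
  linarith

lemma var_ineq {ι : Type*} (S : Finset ι) (y f g : ι → ℝ)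
    (h : ∀ t : ℝ, 0 < t → t ≤ 1 →
      ∑ i ∈ S, (y i - f i) ^ 2 ≤ ∑ i ∈ S, (y i - (f i + t * (g i - f i))) ^ 2) :
    ∑ i ∈ S, (y i - f i) * (g i - f i) ≤ 0 := by
  apply quad_aux (∑ i ∈ S, (g i - f i) ^ 2)
  intro t ht ht1
  have h2 := h t ht ht1
  have expand : ∑ i ∈ S, (y i - (f i + t * (g i - f i))) ^ 2
      = ∑ i ∈ S, ((y i - f i) ^ 2 - (2 * ((y i - f i) * (g i - f i))) * t
        + ((g i - f i) ^ 2) * t ^ 2) := by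
    apply Finset.sum_congr rfl; intro i _; ring
  rw [expand] at h2
  simp only [Finset.sum_add_distrib, Finset.sum_sub_distrib, ← Finset.sum_mul,
    ← Finset.mul_sum] at h2
  set B := ∑ i ∈ S, (y i - f i) * (g i - f i)
  set A := ∑ i ∈ S, (g i - f i) ^ 2
  have h3 : (2 * B) * t ≤ (t * A) * t := by nlinarith
  exact le_of_mul_le_mul_right h3 ht

lemma proj_ineq {ι : Type*} (S : Finset ι) (y f g : ι → ℝ)
    (hvar : ∑ i ∈ S, (y i - f i) * (g i - f i) ≤ 0) :
    ∑ i ∈ S, (g i - f i) ^ 2 ≤ ∑ i ∈ S, (y i - g i) ^ 2 - ∑ i ∈ S, (y i - f i) ^ 2 := by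
  have expand : ∑ i ∈ S, (y i - g i) ^ 2
      = ∑ i ∈ S, ((y i - f i) ^ 2 - 2 * ((y i - f i) * (g i - f i)) + (g i - f i) ^ 2) := by
    apply Finset.sum_congr rfl; intro i _; ring
  rw [expand]
  simp only [Finset.sum_add_distrib, Finset.sum_sub_distrib, ← Finset.mul_sum]
  linarith

lemma pred_unbiased_core {ι : Type*} (S : Finset ι) (xv y : ι → ℝ) (a b : ℝ) (hab : a ≤ b)
    (f : ℝ → ℝ) (hf : Monotone f) (hfr : ∀ t, f t ∈ Set.Icc a b)
    (hy : ∀ i ∈ S, y i ∈ Set.Icc a b)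
    (hvar : ∀ g : ℝ → ℝ, Monotone g → (∀ t, g t ∈ Set.Icc a b) →
      ∑ i ∈ S, (y i - f (xv i)) * (g (xv i) - f (xv i)) ≤ 0) :
    ∑ i ∈ S, f (xv i) = ∑ i ∈ S, y i := by
  have key : ∑ i ∈ S, (y i - f (xv i)) = 0 := by
    have upper : ∑ i ∈ S, (y i - f (xv i)) ≤ 0 := by
      by_cases hT : (S.filter (fun i => f (xv i) < b)).Nonempty
      · set T := S.filter (fun i => f (xv i) < b) with hTdef
        set ε := T.inf' hT (fun i => b - f (xv i)) with hεdef
        have hε : 0 < ε := by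
          rw [hεdef, Finset.lt_inf'_iff]
          intro i hi
          have := (Finset.mem_filter.1 hi).2
          linarith
        have hg : Monotone (fun t => min (f t + ε) b) :=
          Monotone.min (by exact fun u v huv => by simpa using add_le_add_right (hf huv) ε)
            monotone_const
        have hgr : ∀ t, (fun t => min (f t + ε) b) t ∈ Set.Icc a b := by
          intro t
          constructor
          · apply le_min _ hab
            have := (hfr t).1; linarith
          · exact min_le_right _ _
        have h0 := hvar _ hg hgr
        have hsplit : ∑ i ∈ S, (y i - f (xv i)) * (min (f (xv i) + ε) b - f (xv i))
            = ∑ i ∈ T, (y i - f (xv i)) * ε := by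
          rw [hTdef, Finset.sum_filter]
          apply Finset.sum_congr rfl
          intro i _
          by_cases hib : f (xv i) < b
          · simp only [hib, if_true]
            have : ε ≤ b - f (xv i) := Finset.inf'_le _ (Finset.mem_filter.2 ⟨‹i ∈ S›, hib⟩)
            rw [min_eq_left (by linarith)]
            ring_nf
          · simp only [hib, if_false]
            have hfb : f (xv i) = b := le_antisymm (hfr (xv i)).2 (not_lt.1 hib)
            rw [hfb, min_eq_right (by linarith), sub_self, mul_zero]
        rw [hsplit] at h0
        rw [← Finset.sum_mul] at h0
        have hTle : ∑ i ∈ T, (y i - f (xv i)) ≤ 0 := by by_contra hc; push_neg at hc; nlinarith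
        have hrest : ∑ i ∈ S.filter (fun i => ¬ f (xv i) < b), (y i - f (xv i)) ≤ 0 := by
          apply Finset.sum_nonpos
          intro i hi
          obtain ⟨hiS, hib⟩ := Finset.mem_filter.1 hi
          have hfb : f (xv i) = b := le_antisymm (hfr (xv i)).2 (not_lt.1 hib)
          have := (hy i hiS).2
          rw [hfb]; linarith
        calc ∑ i ∈ S, (y i - f (xv i))
            = ∑ i ∈ T, (y i - f (xv i))
              + ∑ i ∈ S.filter (fun i => ¬ f (xv i) < b), (y i - f (xv i)) :=
              (Finset.sum_filter_add_sum_filter_not S _ _).symm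
          _ ≤ 0 := by linarith
      · apply Finset.sum_nonpos
        intro i hiS
        have hib : ¬ f (xv i) < b := by
          intro hlt
          exact hT ⟨i, Finset.mem_filter.2 ⟨hiS, hlt⟩⟩
        have hfb : f (xv i) = b := le_antisymm (hfr (xv i)).2 (not_lt.1 hib)
        have := (hy i hiS).2
        rw [hfb]; linarith
    have lower : 0 ≤ ∑ i ∈ S, (y i - f (xv i)) := by
      by_cases hT : (S.filter (fun i => a < f (xv i))).Nonempty
      · set T := S.filter (fun i => a < f (xv i)) with hTdef
        set ε := T.inf' hT (fun i => f (xv i) - a) with hεdef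
        have hε : 0 < ε := by
          rw [hεdef, Finset.lt_inf'_iff]
          intro i hi
          have := (Finset.mem_filter.1 hi).2
          linarith
        have hg : Monotone (fun t => max (f t - ε) a) :=
          Monotone.max (by exact fun u v huv => by simpa using sub_le_sub_right (hf huv) ε)
            monotone_const
        have hgr : ∀ t, (fun t => max (f t - ε) a) t ∈ Set.Icc a b := by
          intro t
          constructor
          · exact le_max_right _ _
          · apply max_le _ hab
            have := (hfr t).2; linarith
        have h0 := hvar _ hg hgr
        have hsplit : ∑ i ∈ S, (y i - f (xv i)) * (max (f (xv i) - ε) a - f (xv i))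
            = ∑ i ∈ T, (y i - f (xv i)) * (-ε) := by
          rw [hTdef, Finset.sum_filter]
          apply Finset.sum_congr rfl
          intro i _
          by_cases hib : a < f (xv i)
          · simp only [hib, if_true]
            have : ε ≤ f (xv i) - a := Finset.inf'_le _ (Finset.mem_filter.2 ⟨‹i ∈ S›, hib⟩)
            rw [max_eq_left (by linarith)]
            ring_nf
          · simp only [hib, if_false]
            have hfa : f (xv i) = a := le_antisymm (not_lt.1 hib) (hfr (xv i)).1
            rw [hfa, max_eq_right (by linarith), sub_self, mul_zero]
        rw [hsplit] at h0
        rw [← Finset.sum_mul] at h0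
        have hTge : 0 ≤ ∑ i ∈ T, (y i - f (xv i)) := by
          by_contra hneg
          push_neg at hneg
          nlinarith
        have hrest : 0 ≤ ∑ i ∈ S.filter (fun i => ¬ a < f (xv i)), (y i - f (xv i)) := by
          apply Finset.sum_nonneg
          intro i hi
          obtain ⟨hiS, hib⟩ := Finset.mem_filter.1 hi
          have hfa : f (xv i) = a := le_antisymm (not_lt.1 hib) (hfr (xv i)).1
          have := (hy i hiS).1
          rw [hfa]; linarith
        calc (0:ℝ) ≤ ∑ i ∈ T, (y i - f (xv i))
              + ∑ i ∈ S.filter (fun i => ¬ a < f (xv i)), (y i - f (xv i)) := by linarith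
          _ = ∑ i ∈ S, (y i - f (xv i)) := Finset.sum_filter_add_sum_filter_not S _ _
      · apply Finset.sum_nonneg
        intro i hiS
        have hib : ¬ a < f (xv i) := by
          intro hlt
          exact hT ⟨i, Finset.mem_filter.2 ⟨hiS, hlt⟩⟩
        have hfa : f (xv i) = a := le_antisymm (not_lt.1 hib) (hfr (xv i)).1
        have := (hy i hiS).1
        rw [hfa]; linarith
    linarith
  rw [Finset.sum_sub_distrib] at key
  linarith

/-- empirical rank -/
def rankx {n : ℕ} (x : Fin n → ℝ) (t : ℝ) : ℕ := (Finset.univ.filter fun i => x i ≤ t).card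

lemma rankx_mono {n : ℕ} (x : Fin n → ℝ) {t t' : ℝ} (h : t ≤ t') : rankx x t ≤ rankx x t' :=
  Finset.card_le_card (by
    intro i hi
    simp only [Finset.mem_filter, Finset.mem_univ, true_and] at hi ⊢
    exact le_trans hi h)

lemma rankx_le {n : ℕ} (x : Fin n → ℝ) (t : ℝ) : rankx x t ≤ n := by
  have := Finset.card_filter_le (Finset.univ : Finset (Fin n)) (fun i => x i ≤ t)
  simpa [rankx] using this

/-- quantile bucket, in `{0, …, M'}` -/
def bucketN {n : ℕ} (M' : ℕ) (x : Fin n → ℝ) (t : ℝ) : ℕ :=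
  min M' ((M' + 1) * rankx x t / n)

lemma bucketN_le {n : ℕ} (M' : ℕ) (x : Fin n → ℝ) (t : ℝ) : bucketN M' x t ≤ M' :=
  min_le_left _ _

lemma bucketN_mono {n : ℕ} (M' : ℕ) (x : Fin n → ℝ) {t t' : ℝ} (h : t ≤ t') :
    bucketN M' x t ≤ bucketN M' x t' :=
  min_le_min le_rfl (Nat.div_le_div_right (Nat.mul_le_mul_left _ (rankx_mono x h)))

def bucketF {n : ℕ} (M' : ℕ) (x : Fin n → ℝ) (t : ℝ) : Fin (M' + 1) :=
  ⟨bucketN M' x t, Nat.lt_succ_of_le (bucketN_le M' x t)⟩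

/-- candidate net functions -/
def netf {n : ℕ} (a δ : ℝ) (M' G : ℕ) (x : Fin n → ℝ) (u : Fin (M' + 1) → Fin (G + 1)) :
    ℝ → ℝ :=
  fun t => a + δ * ((u (bucketF M' x t) : ℕ) : ℝ)

lemma netf_mem {n : ℕ} (a δ : ℝ) (hδ : 0 ≤ δ) (M' G : ℕ) (x : Fin n → ℝ)
    (u : Fin (M' + 1) → Fin (G + 1)) (t : ℝ) :
    netf a δ M' G x u t ∈ Set.Icc a (a + δ * G) := by
  unfold netf
  constructor
  · have : (0:ℝ) ≤ δ * ((u (bucketF M' x t) : ℕ) : ℝ) := by positivity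
    linarith
  · have hle : ((u (bucketF M' x t) : ℕ) : ℝ) ≤ (G : ℝ) := by
      have := Fin.is_le (u (bucketF M' x t))
      exact_mod_cast this
    nlinarith

open Classical in
/-- monotone maps between initial segments -/
def monoSet (M G : ℕ) : Finset (Fin M → Fin (G + 1)) :=
  Finset.univ.filter (fun u => Monotone u)

lemma mono_char {M G : ℕ} (u : Fin M → Fin (G + 1)) (hu : Monotone u) (g : Fin (G + 1))
    (j : Fin M) :
    u j ≤ g ↔ (j : ℕ) < (Finset.univ.filter fun j' => u j' ≤ g).card := by
  classical
  constructor
  · intro h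
    have hsub : Finset.Iic j ⊆ Finset.univ.filter fun j' => u j' ≤ g := by
      intro k hk
      simp only [Finset.mem_filter, Finset.mem_univ, true_and]
      exact le_trans (hu (Finset.mem_Iic.1 hk)) h
    have hc := Finset.card_le_card hsub
    rw [Fin.card_Iic] at hc
    omega
  · intro h
    by_contra hc
    push_neg at hc
    have hsub : (Finset.univ.filter fun j' => u j' ≤ g) ⊆ Finset.Iio j := by
      intro k hk
      simp only [Finset.mem_filter, Finset.mem_univ, true_and] at hk
      rw [Finset.mem_Iio]
      by_contra hk2
      push_neg at hk2
      exact absurd (le_trans (hu hk2) hk) (not_le.2 hc)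
    have hc2 := Finset.card_le_card hsub
    rw [Fin.card_Iio] at hc2
    omega

lemma monoSet_card (M G : ℕ) : (monoSet M G).card ≤ (M + 1) ^ (G + 1) := by
  classical
  have hinj : ∀ u ∈ monoSet M G, ∀ u' ∈ monoSet M G,
      (fun g : Fin (G + 1) => (⟨(Finset.univ.filter fun j => u j ≤ g).card, by
          have := Finset.card_filter_le (Finset.univ : Finset (Fin M)) (fun j => u j ≤ g)
          simp only [Finset.card_univ, Fintype.card_fin] at this
          omega⟩ : Fin (M + 1)))
      = (fun g : Fin (G + 1) => (⟨(Finset.univ.filter fun j => u' j ≤ g).card, by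
          have := Finset.card_filter_le (Finset.univ : Finset (Fin M)) (fun j => u' j ≤ g)
          simp only [Finset.card_univ, Fintype.card_fin] at this
          omega⟩ : Fin (M + 1))) → u = u' := by
    intro u hu u' hu' heq
    have hum : Monotone u := by
      have := Finset.mem_filter.1 hu; exact this.2
    have hum' : Monotone u' := by
      have := Finset.mem_filter.1 hu'; exact this.2
    have hcard : ∀ g : Fin (G + 1), (Finset.univ.filter fun j => u j ≤ g).card
        = (Finset.univ.filter fun j => u' j ≤ g).card := by
      intro g
      have := congrFun heq g
      simpa [Fin.mk.injEq] using this
    funext j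
    have hiff : ∀ g : Fin (G + 1), u j ≤ g ↔ u' j ≤ g := by
      intro g
      rw [mono_char u hum g j, mono_char u' hum' g j, hcard g]
    exact le_antisymm ((hiff (u' j)).2 le_rfl) ((hiff (u j)).1 le_rfl)
  calc (monoSet M G).card
      ≤ (Finset.univ : Finset (Fin (G + 1) → Fin (M + 1))).card := by
        apply Finset.card_le_card_of_injOn _ (fun _ _ => Finset.mem_univ _)
        intro u hu u' hu' h
        exact hinj u hu u' hu' h
    _ = (M + 1) ^ (G + 1) := by
        simp [Finset.card_univ, Fintype.card_fun]

lemma sum_osc (A B : ℕ → ℝ) (lo : ℝ) (J : Finset ℕ) :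
    (∀ j ∈ J, lo ≤ A j) → (∀ j ∈ J, A j ≤ B j) →
      (∀ j ∈ J, ∀ k ∈ J, j < k → B j ≤ A k) →
      ∀ hi : ℝ, (∀ j ∈ J, B j ≤ hi) → lo ≤ hi →
      ∑ j ∈ J, (B j - A j) ≤ hi - lo := by
  induction J using Finset.induction_on_max with
  | empty => intro _ _ _ hi _ hlohi; simp; linarith
  | insert c s hc ih =>
    intro h1 h2 h3 hi hhi hlohi
    rw [Finset.sum_insert (by intro hmem; exact absurd (hc c hmem) (lt_irrefl c))]
    have hstep : ∑ j ∈ s, (B j - A j) ≤ A c - lo :=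
      ih (fun j hj => h1 j (Finset.mem_insert_of_mem hj))
        (fun j hj => h2 j (Finset.mem_insert_of_mem hj))
        (fun j hj k hk hjk =>
          h3 j (Finset.mem_insert_of_mem hj) k (Finset.mem_insert_of_mem hk) hjk)
        (A c) (fun j hj => h3 j (Finset.mem_insert_of_mem hj) c (Finset.mem_insert_self c s)
          (hc j hj))
        (h1 c (Finset.mem_insert_self c s))
    have hBc : B c ≤ hi := hhi c (Finset.mem_insert_self c s)
    have hAc : A c ≤ B c := h2 c (Finset.mem_insert_self c s)
    linarith



def Pset {n : ℕ} (M' : ℕ) (x : Fin n → ℝ) (j : ℕ) : Finset (Fin n) :=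
  Finset.univ.filter (fun i => bucketN M' x (x i) = j)

def Sset {n : ℕ} (M' : ℕ) (x : Fin n → ℝ) (j : ℕ) : Finset (Fin n) :=
  Finset.univ.filter (fun i => j ≤ bucketN M' x (x i))

def valf {n : ℕ} (M' : ℕ) (x : Fin n → ℝ) (b : ℝ) (f : ℝ → ℝ) (j : ℕ) : ℝ :=
  if h : (Sset M' x j).Nonempty then f ((Sset M' x j).inf' h x) else b

lemma valf_mono {n : ℕ} (M' : ℕ) (x : Fin n → ℝ) (b : ℝ) (f : ℝ → ℝ) (hf : Monotone f)
    (hfb : ∀ t, f t ≤ b) {j k : ℕ} (hjk : j ≤ k) : valf M' x b f j ≤ valf M' x b f k := by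
  unfold valf
  have hsub : Sset M' x k ⊆ Sset M' x j := by
    intro i hi
    simp only [Sset, Finset.mem_filter, Finset.mem_univ, true_and] at hi ⊢
    omega
  by_cases hk : (Sset M' x k).Nonempty
  · have hj : (Sset M' x j).Nonempty := hk.mono hsub
    rw [dif_pos hj, dif_pos hk]
    apply hf
    exact Finset.le_inf' hk x (fun i hi => Finset.inf'_le x (hsub hi))
  · rw [dif_neg hk]
    by_cases hj : (Sset M' x j).Nonempty
    · rw [dif_pos hj]; exact hfb _
    · rw [dif_neg hj]

lemma valf_mem {n : ℕ} (M' : ℕ) (x : Fin n → ℝ) {a b : ℝ} {f : ℝ → ℝ} (hab : a ≤ b)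
    (hfr : ∀ t, f t ∈ Set.Icc a b) (j : ℕ) : valf M' x b f j ∈ Set.Icc a b := by
  unfold valf
  by_cases h : (Sset M' x j).Nonempty
  · rw [dif_pos h]; exact hfr _
  · rw [dif_neg h]; exact ⟨hab, le_rfl⟩

lemma Pset_inf_val {n : ℕ} (M' : ℕ) (x : Fin n → ℝ) (b : ℝ) (f : ℝ → ℝ) (j : ℕ)
    (h : (Pset M' x j).Nonempty) :
    valf M' x b f j = f ((Pset M' x j).inf' h x) := by
  obtain ⟨i0, hi0, heq⟩ := Finset.exists_mem_eq_inf' h x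
  have hi0P : bucketN M' x (x i0) = j := by
    have := Finset.mem_filter.1 hi0; exact this.2
  have hi0S : i0 ∈ Sset M' x j := by
    simp only [Sset, Finset.mem_filter, Finset.mem_univ, true_and]; omega
  have hSne : (Sset M' x j).Nonempty := ⟨i0, hi0S⟩
  unfold valf
  rw [dif_pos hSne]
  congr 1
  rw [heq]
  apply le_antisymm
  · exact Finset.inf'_le x hi0S
  · apply Finset.le_inf' hSne x
    intro k hk
    by_contra hlt
    push_neg at hlt
    have hbk : bucketN M' x (x k) ≤ bucketN M' x (x i0) := bucketN_mono M' x hlt.le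
    have hkS : j ≤ bucketN M' x (x k) := by
      have := Finset.mem_filter.1 hk; exact this.2
    have hkP : k ∈ Pset M' x j := by
      simp only [Pset, Finset.mem_filter, Finset.mem_univ, true_and]; omega
    have hle2 := Finset.inf'_le x hkP
    rw [heq] at hle2
    exact absurd hle2 (not_le.2 hlt)

lemma Pset_count {n : ℕ} (hn : 0 < n) (M' : ℕ) (x : Fin n → ℝ) (j : ℕ)
    (h : (Pset M' x j).Nonempty) :
    (((Pset M' x j).filter (fun i => (Pset M' x j).inf' h x < x i)).card : ℝ)
      ≤ (n : ℝ) / (M' + 1) := by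
  classical
  obtain ⟨i0, hi0, heq0⟩ := Finset.exists_mem_eq_inf' h x
  obtain ⟨i1, hi1, heq1⟩ := Finset.exists_mem_eq_sup' h x
  set mn := (Pset M' x j).inf' h x with hmn
  set mx := (Pset M' x j).sup' h x with hmx
  have hmnmx : mn ≤ mx := le_trans (le_of_eq heq0) (Finset.le_sup' x hi0)
  have hb0 : bucketN M' x mn = j := by rw [heq0]; exact (Finset.mem_filter.1 hi0).2
  have hb1 : bucketN M' x mx = j := by rw [heq1]; exact (Finset.mem_filter.1 hi1).2
  -- key natural-number inequality
  have hkey : (M' + 1) * rankx x mx ≤ (M' + 1) * rankx x mn + n := by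
    have hr1 : rankx x mx ≤ n := rankx_le x mx
    unfold bucketN at hb0 hb1
    rcases Nat.lt_or_ge j M' with hjM | hjM
    · have hd1 : (M' + 1) * rankx x mx / n = j := by omega
      have hd0 : (M' + 1) * rankx x mn / n = j := by omega
      have h1 : (M' + 1) * rankx x mx < (j + 1) * n := by
        rw [← Nat.div_lt_iff_lt_mul hn]; omega
      have h0 : j * n ≤ (M' + 1) * rankx x mn := by
        rw [← Nat.le_div_iff_mul_le hn]; omega
      have he : (j + 1) * n = j * n + n := by ring
      omega
    · -- j = M'
      have hjeq : j = M' := by omega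
      have h0 : M' ≤ (M' + 1) * rankx x mn / n := by omega
      have h0' : M' * n ≤ (M' + 1) * rankx x mn := by
        rw [← Nat.le_div_iff_mul_le hn]; omega
      have h1 : (M' + 1) * rankx x mx ≤ (M' + 1) * n := Nat.mul_le_mul_left _ hr1
      have he : (M' + 1) * n = M' * n + n := by ring
      omega
  have hsub : (Pset M' x j).filter (fun i => mn < x i)
      ⊆ (Finset.univ.filter (fun k => x k ≤ mx)) \ (Finset.univ.filter (fun k => x k ≤ mn)) := by
    intro i hi
    obtain ⟨hiP, hilt⟩ := Finset.mem_filter.1 hi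
    rw [Finset.mem_sdiff]
    constructor
    · simp only [Finset.mem_filter, Finset.mem_univ, true_and]
      exact Finset.le_sup' x hiP
    · simp only [Finset.mem_filter, Finset.mem_univ, true_and]
      exact not_le.2 hilt
  have hcard : ((Pset M' x j).filter (fun i => mn < x i)).card
      ≤ rankx x mx - rankx x mn := by
    have := Finset.card_le_card hsub
    rw [Finset.card_sdiff_of_subset (by
      intro k hk
      simp only [Finset.mem_filter, Finset.mem_univ, true_and] at hk ⊢
      linarith)] at this
    exact this
  have hrle : rankx x mn ≤ rankx x mx := rankx_mono x hmnmx
  have hnat : (M' + 1) * ((Pset M' x j).filter (fun i => mn < x i)).card ≤ n := by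
    have hcard' : ((Pset M' x j).filter (fun i => mn < x i)).card + rankx x mn
        ≤ rankx x mx := by omega
    have h4 : (M' + 1) * (((Pset M' x j).filter (fun i => mn < x i)).card + rankx x mn)
        ≤ (M' + 1) * rankx x mx := Nat.mul_le_mul_left _ hcard'
    have h5 : (M' + 1) * (((Pset M' x j).filter (fun i => mn < x i)).card + rankx x mn)
        = (M' + 1) * ((Pset M' x j).filter (fun i => mn < x i)).card
          + (M' + 1) * rankx x mn := by ring
    omega
  rw [le_div_iff₀ (by positivity), mul_comm]
  exact_mod_cast hnat

lemma net_cover {n : ℕ} (hn : 0 < n) (x : Fin n → ℝ) (a b δ : ℝ) (hab : a ≤ b) (hδ : 0 < δ)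
    (M' G : ℕ) (hG : (b - a) / δ ≤ G)
    (f : ℝ → ℝ) (hf : Monotone f) (hfr : ∀ t, f t ∈ Set.Icc a b) :
    ∃ u ∈ monoSet (M' + 1) G,
      ∑ i, (f (x i) - netf a δ M' G x u (x i)) ^ 2
        ≤ 2 * n * δ ^ 2 + 2 * ((n : ℝ) / (M' + 1)) * (b - a) ^ 2 := by
  classical
  have hfloorG : ∀ j : ℕ, Nat.floor ((valf M' x b f j - a) / δ) ≤ G := by
    intro j
    have hv := valf_mem M' x hab hfr j
    have hle : (valf M' x b f j - a) / δ ≤ (G : ℝ) := by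
      refine le_trans ?_ hG
      gcongr
      exact hv.2
    calc Nat.floor ((valf M' x b f j - a) / δ) ≤ Nat.floor ((G : ℝ)) :=
          Nat.floor_le_floor hle
      _ = G := Nat.floor_natCast G
  refine ⟨fun j => ⟨Nat.floor ((valf M' x b f (j : ℕ) - a) / δ),
    Nat.lt_succ_of_le (hfloorG _)⟩, ?_, ?_⟩
  · simp only [monoSet, Finset.mem_filter, Finset.mem_univ, true_and]
    intro j k hjk
    simp only [Fin.mk_le_mk]
    apply Nat.floor_le_floor
    gcongr
    have hb' : ∀ t, f t ≤ b := fun t => (hfr t).2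
    exact valf_mono M' x b f hf hb' hjk
  · set uu : Fin (M' + 1) → Fin (G + 1) := fun j => ⟨Nat.floor ((valf M' x b f (j : ℕ) - a) / δ),
      Nat.lt_succ_of_le (hfloorG _)⟩ with huu
    have key : ∀ i, (f (x i) - netf a δ M' G x uu (x i)) ^ 2
        ≤ 2 * δ ^ 2 + 2 * (f (x i) - valf M' x b f (bucketN M' x (x i))) ^ 2 := by
      intro i
      have hnet : netf a δ M' G x uu (x i)
          = a + δ * (Nat.floor ((valf M' x b f (bucketN M' x (x i)) - a) / δ) : ℝ) := rfl
      set j := bucketN M' x (x i) with hj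
      have hiS : i ∈ Sset M' x j := by
        simp only [Sset, Finset.mem_filter, Finset.mem_univ, true_and]
        exact le_of_eq hj
      have hSne : (Sset M' x j).Nonempty := ⟨i, hiS⟩
      have hval_le : valf M' x b f j ≤ f (x i) := by
        unfold valf
        rw [dif_pos hSne]
        exact hf (Finset.inf'_le x hiS)
      have hvmem := valf_mem M' x hab hfr j
      have hq0 : 0 ≤ (valf M' x b f j - a) / δ := div_nonneg (by linarith [hvmem.1]) hδ.le
      have hfl_le : δ * (Nat.floor ((valf M' x b f j - a) / δ) : ℝ) ≤ valf M' x b f j - a := by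
        calc δ * (Nat.floor ((valf M' x b f j - a) / δ) : ℝ)
            ≤ δ * ((valf M' x b f j - a) / δ) := by
              have := Nat.floor_le hq0
              gcongr
          _ = valf M' x b f j - a := by field_simp
      have hfl_gt : valf M' x b f j - a
          < δ * ((Nat.floor ((valf M' x b f j - a) / δ) : ℝ) + 1) := by
        calc valf M' x b f j - a = δ * ((valf M' x b f j - a) / δ) := by field_simp
          _ < δ * ((Nat.floor ((valf M' x b f j - a) / δ) : ℝ) + 1) := by
              have := Nat.lt_floor_add_one ((valf M' x b f j - a) / δ)
              gcongr
      set e := f (x i) - valf M' x b f j with he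
      have he0 : 0 ≤ e := by rw [he]; linarith
      have h1 : 0 ≤ f (x i) - netf a δ M' G x uu (x i) := by rw [hnet]; nlinarith
      have h2 : f (x i) - netf a δ M' G x uu (x i) ≤ e + δ := by rw [hnet, he]; nlinarith
      have h3 : (f (x i) - netf a δ M' G x uu (x i)) ^ 2 ≤ (e + δ) ^ 2 := by
        apply pow_le_pow_left₀ h1 h2
      nlinarith [sq_nonneg (e - δ)]
    -- sum of fiber errors
    set A : ℕ → ℝ := fun j =>
      if h : (Pset M' x j).Nonempty then f ((Pset M' x j).inf' h x) else a with hA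
    set B : ℕ → ℝ := fun j =>
      if h : (Pset M' x j).Nonempty then f ((Pset M' x j).sup' h x) else a with hB
    have hfiber : ∀ j ∈ Finset.range (M' + 1),
        ∑ i ∈ Finset.univ.filter (fun i => bucketN M' x (x i) = j),
          (f (x i) - valf M' x b f (bucketN M' x (x i))) ^ 2
        ≤ ((n : ℝ) / (M' + 1)) * ((b - a) * (B j - A j)) := by
      intro j _
      by_cases hne : (Pset M' x j).Nonempty
      · have hsum_eq : ∑ i ∈ Finset.univ.filter (fun i => bucketN M' x (x i) = j),
            (f (x i) - valf M' x b f (bucketN M' x (x i))) ^ 2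
            = ∑ i ∈ Pset M' x j, (f (x i) - f ((Pset M' x j).inf' hne x)) ^ 2 := by
          apply Finset.sum_congr rfl
          intro i hi
          have hbij : bucketN M' x (x i) = j := (Finset.mem_filter.1 hi).2
          rw [hbij, Pset_inf_val M' x b f j hne]
        rw [hsum_eq]
        rw [← Finset.sum_filter_add_sum_filter_not (Pset M' x j)
          (fun i => (Pset M' x j).inf' hne x < x i)]
        have hrest : ∑ i ∈ (Pset M' x j).filter
            (fun i => ¬ (Pset M' x j).inf' hne x < x i),
            (f (x i) - f ((Pset M' x j).inf' hne x)) ^ 2 = 0 := by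
          apply Finset.sum_eq_zero
          intro i hi
          obtain ⟨hiP, hile⟩ := Finset.mem_filter.1 hi
          have : x i = (Pset M' x j).inf' hne x :=
            le_antisymm (not_lt.1 hile) (Finset.inf'_le x hiP)
          rw [this, sub_self]
          ring
        rw [hrest, add_zero]
        have hAj : A j = f ((Pset M' x j).inf' hne x) := by rw [hA]; simp [dif_pos hne]
        have hBj : B j = f ((Pset M' x j).sup' hne x) := by rw [hB]; simp [dif_pos hne]
        have hosc0 : 0 ≤ B j - A j := by
          rw [hAj, hBj]
          have : (Pset M' x j).inf' hne x ≤ (Pset M' x j).sup' hne x := by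
            obtain ⟨i0, hi0⟩ := hne
            exact le_trans (Finset.inf'_le x hi0) (Finset.le_sup' x hi0)
          have := hf this
          linarith
        have hoscb : B j - A j ≤ b - a := by
          rw [hAj, hBj]
          have h1 := (hfr ((Pset M' x j).inf' hne x)).1
          have h2 := (hfr ((Pset M' x j).sup' hne x)).2
          linarith
        have hcard := Pset_count hn M' x j hne
        have hbound : ∀ i ∈ (Pset M' x j).filter (fun i => (Pset M' x j).inf' hne x < x i),
            (f (x i) - f ((Pset M' x j).inf' hne x)) ^ 2 ≤ (B j - A j) ^ 2 := by
          intro i hi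
          obtain ⟨hiP, _⟩ := Finset.mem_filter.1 hi
          have hge : 0 ≤ f (x i) - f ((Pset M' x j).inf' hne x) := by
            have := hf (Finset.inf'_le x hiP); linarith
          have hle : f (x i) - f ((Pset M' x j).inf' hne x) ≤ B j - A j := by
            rw [hAj, hBj]
            have := hf (Finset.le_sup' x hiP)
            linarith
          exact pow_le_pow_left₀ hge hle 2
        calc ∑ i ∈ (Pset M' x j).filter (fun i => (Pset M' x j).inf' hne x < x i),
              (f (x i) - f ((Pset M' x j).inf' hne x)) ^ 2
            ≤ (((Pset M' x j).filter (fun i => (Pset M' x j).inf' hne x < x i)).card : ℝ)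
              * (B j - A j) ^ 2 := by
              have := Finset.sum_le_card_nsmul _ _ _ hbound
              simpa [nsmul_eq_mul] using this
          _ ≤ ((n : ℝ) / (M' + 1)) * (B j - A j) ^ 2 := by
              apply mul_le_mul_of_nonneg_right hcard (by positivity)
          _ ≤ ((n : ℝ) / (M' + 1)) * ((b - a) * (B j - A j)) := by
              apply mul_le_mul_of_nonneg_left _ (by positivity)
              have h2 : (B j - A j) ^ 2 = (B j - A j) * (B j - A j) := by ring
              rw [h2]
              exact mul_le_mul_of_nonneg_right hoscb hosc0
      · have hPe : Finset.univ.filter (fun i => bucketN M' x (x i) = j) = ∅ := by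
          rw [Finset.filter_eq_empty_iff]
          intro i _
          intro hc
          exact hne ⟨i, by simp only [Pset, Finset.mem_filter, Finset.mem_univ, true_and]; exact hc⟩
        rw [hPe, Finset.sum_empty]
        have hABj : A j = a ∧ B j = a := by constructor <;> simp [hA, hB, dif_neg hne]
        rw [hABj.1, hABj.2]
        have : ((b - a) * (a - a)) = 0 := by ring
        rw [this, mul_zero]
    -- telescoping bound
    have htel : ∑ j ∈ (Finset.range (M' + 1)).filter (fun j => (Pset M' x j).Nonempty),
        (B j - A j) ≤ b - a := by
      apply sum_osc A B a _ _ _ _ b _ hab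
      · intro j hj
        have hne := (Finset.mem_filter.1 hj).2
        rw [hA]; simp only [dif_pos hne]
        exact (hfr _).1
      · intro j hj
        have hne := (Finset.mem_filter.1 hj).2
        rw [hA, hB]; simp only [dif_pos hne]
        apply hf
        obtain ⟨i0, hi0⟩ := hne
        exact le_trans (Finset.inf'_le x hi0) (Finset.le_sup' x hi0)
      · intro j hj k hk hjk
        have hnej := (Finset.mem_filter.1 hj).2
        have hnek := (Finset.mem_filter.1 hk).2
        rw [hA, hB]; simp only [dif_pos hnej, dif_pos hnek]
        apply hf
        apply Finset.sup'_le hnej x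
        intro i1 hi1
        apply Finset.le_inf' hnek x
        intro i2 hi2
        by_contra hc
        push_neg at hc
        have hmono := bucketN_mono M' x hc.le
        have h1 : bucketN M' x (x i1) = j := (Finset.mem_filter.1 hi1).2
        have h2 : bucketN M' x (x i2) = k := (Finset.mem_filter.1 hi2).2
        omega
      · intro j hj
        have hne := (Finset.mem_filter.1 hj).2
        rw [hB]; simp only [dif_pos hne]
        exact (hfr _).2
    have hsum_e : ∑ i, (f (x i) - valf M' x b f (bucketN M' x (x i))) ^ 2
        ≤ ((n : ℝ) / (M' + 1)) * (b - a) ^ 2 := by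
      have hmaps : ∀ i ∈ (Finset.univ : Finset (Fin n)),
          bucketN M' x (x i) ∈ Finset.range (M' + 1) :=
        fun i _ => Finset.mem_range.2 (Nat.lt_succ_of_le (bucketN_le M' x (x i)))
      rw [← Finset.sum_fiberwise_of_maps_to hmaps
        (fun i => (f (x i) - valf M' x b f (bucketN M' x (x i))) ^ 2)]
      calc ∑ j ∈ Finset.range (M' + 1), ∑ i ∈ Finset.univ.filter
            (fun i => bucketN M' x (x i) = j),
            (f (x i) - valf M' x b f (bucketN M' x (x i))) ^ 2
          ≤ ∑ j ∈ Finset.range (M' + 1), ((n : ℝ) / (M' + 1)) * ((b - a) * (B j - A j)) :=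
            Finset.sum_le_sum hfiber
        _ = ((n : ℝ) / (M' + 1)) * (b - a) * ∑ j ∈ Finset.range (M' + 1), (B j - A j) := by
            rw [Finset.mul_sum]
            apply Finset.sum_congr rfl
            intro j _
            ring
        _ = ((n : ℝ) / (M' + 1)) * (b - a) *
            ∑ j ∈ (Finset.range (M' + 1)).filter (fun j => (Pset M' x j).Nonempty),
              (B j - A j) := by
            congr 1
            rw [← Finset.sum_filter_add_sum_filter_not (Finset.range (M' + 1))
              (fun j => (Pset M' x j).Nonempty)]
            have : ∑ j ∈ (Finset.range (M' + 1)).filter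
                (fun j => ¬ (Pset M' x j).Nonempty), (B j - A j) = 0 := by
              apply Finset.sum_eq_zero
              intro j hj
              have hne := (Finset.mem_filter.1 hj).2
              rw [hA, hB]; simp only [dif_neg hne]
              ring
            rw [this, add_zero]
        _ ≤ ((n : ℝ) / (M' + 1)) * (b - a) * (b - a) := by
            apply mul_le_mul_of_nonneg_left htel
              (mul_nonneg (by positivity) (sub_nonneg.2 hab))
        _ = ((n : ℝ) / (M' + 1)) * (b - a) ^ 2 := by ring
    calc ∑ i, (f (x i) - netf a δ M' G x uu (x i)) ^ 2
        ≤ ∑ i : Fin n, (2 * δ ^ 2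
          + 2 * (f (x i) - valf M' x b f (bucketN M' x (x i))) ^ 2) :=
          Finset.sum_le_sum (fun i _ => key i)
      _ = 2 * n * δ ^ 2 + 2 * ∑ i, (f (x i) - valf M' x b f (bucketN M' x (x i))) ^ 2 := by
          rw [Finset.sum_add_distrib, Finset.sum_const, ← Finset.mul_sum]
          simp [Finset.card_univ]
          ring
      _ ≤ 2 * n * δ ^ 2 + 2 * (((n : ℝ) / (M' + 1)) * (b - a) ^ 2) := by
          have := hsum_e
          linarith
      _ = 2 * n * δ ^ 2 + 2 * ((n : ℝ) / (M' + 1)) * (b - a) ^ 2 := by ring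

lemma net_master (x : (n : ℕ) → Fin n → ℝ) (a b : ℝ) (hab : a ≤ b) (s : ℝ) (hs : 0 < s)
    (n : ℕ) :
    ∃ T : Finset (ℝ → ℝ),
      T.card ≤ (⌈4 * (b - a) ^ 2 / s ^ 2⌉₊ + 2) ^ (⌈2 * (b - a) / s⌉₊ + 1) ∧
      (∀ g ∈ T, ∀ t : ℝ, g t ∈ Set.Icc a (b + s)) ∧
      (∀ f : ℝ → ℝ, Monotone f → (∀ t : ℝ, f t ∈ Set.Icc a b) →
        ∃ g ∈ T, distN x n f g ≤ s) := by
  classical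
  set M' := ⌈4 * (b - a) ^ 2 / s ^ 2⌉₊ with hM'
  set G := ⌈2 * (b - a) / s⌉₊ with hGd
  set δ := s / 2 with hδd
  have hδ : 0 < δ := by rw [hδd]; linarith
  have hG : (b - a) / δ ≤ (G : ℝ) := by
    have h1 : (b - a) / δ = 2 * (b - a) / s := by
      rw [hδd]; field_simp
    rw [h1, hGd]
    exact Nat.le_ceil _
  refine ⟨(monoSet (M' + 1) G).image (netf a δ M' G (x n)), ?_, ?_, ?_⟩
  · calc ((monoSet (M' + 1) G).image (netf a δ M' G (x n))).card
        ≤ (monoSet (M' + 1) G).card := Finset.card_image_le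
      _ ≤ (M' + 1 + 1) ^ (G + 1) := monoSet_card _ _
      _ = (M' + 2) ^ (G + 1) := by norm_num
  · intro g hg t
    obtain ⟨u, hu, rfl⟩ := Finset.mem_image.1 hg
    have hmem := netf_mem a δ hδ.le M' G (x n) u t
    refine ⟨hmem.1, le_trans hmem.2 ?_⟩
    have hceil : (G : ℝ) < 2 * (b - a) / s + 1 := by
      rw [hGd]
      exact Nat.ceil_lt_add_one (div_nonneg (by linarith) hs.le)
    have hup : δ * (G : ℝ) ≤ (b - a) + δ := by
      rw [hδd]
      have hs2 : (0:ℝ) < s / 2 := by linarith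
      calc s / 2 * (G : ℝ) ≤ s / 2 * (2 * (b - a) / s + 1) :=
            mul_le_mul_of_nonneg_left hceil.le hs2.le
        _ = (b - a) + s / 2 := by field_simp
    have : δ ≤ s := by rw [hδd]; linarith
    linarith
  · intro f hf hfr
    rcases Nat.eq_zero_or_pos n with hn0 | hn
    · have hune : (fun _ : Fin (M' + 1) => (⟨0, Nat.succ_pos G⟩ : Fin (G + 1)))
          ∈ monoSet (M' + 1) G := by
        simp only [monoSet, Finset.mem_filter, Finset.mem_univ, true_and]
        exact monotone_const
      refine ⟨netf a δ M' G (x n) _, Finset.mem_image_of_mem _ hune, ?_⟩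
      subst hn0
      unfold distN
      simp only [Nat.cast_zero, inv_zero, zero_mul, Real.sqrt_zero]
      · exact hs.le
    · obtain ⟨u, hu, hbound⟩ := net_cover hn (x n) a b δ hab hδ M' G hG f hf hfr
      refine ⟨netf a δ M' G (x n) u, Finset.mem_image_of_mem _ hu, ?_⟩
      unfold distN
      rw [show s = Real.sqrt (s ^ 2) from (Real.sqrt_sq hs.le).symm]
      apply Real.sqrt_le_sqrt
      have hnpos : (0:ℝ) < (n : ℝ) := by exact_mod_cast hn
      have hM1 : 4 * (b - a) ^ 2 / s ^ 2 ≤ (M' : ℝ) + 1 :=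
        le_trans (Nat.le_ceil _) (by linarith)
      have hM1' : 4 * (b - a) ^ 2 ≤ ((M' : ℝ) + 1) * s ^ 2 := by
        rw [div_le_iff₀ (by positivity)] at hM1
        linarith
      have hkey2 : 2 * δ ^ 2 + 2 * ((b - a) ^ 2 / ((M' : ℝ) + 1)) ≤ s ^ 2 := by
        have hd : δ ^ 2 = s ^ 2 / 4 := by rw [hδd]; ring
        have h2 : (b - a) ^ 2 / ((M' : ℝ) + 1) ≤ s ^ 2 / 4 := by
          rw [div_le_iff₀ (by positivity)]
          linarith
        rw [hd]
        linarith
      calc (↑n)⁻¹ * ∑ i, (f (x n i) - netf a δ M' G (x n) u (x n i)) ^ 2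
          ≤ (↑n)⁻¹ * (2 * ↑n * δ ^ 2 + 2 * ((n : ℝ) / (M' + 1)) * (b - a) ^ 2) := by
            apply mul_le_mul_of_nonneg_left hbound (by positivity)
        _ = 2 * δ ^ 2 + 2 * ((b - a) ^ 2 / ((M' : ℝ) + 1)) := by
            field_simp
        _ ≤ s ^ 2 := hkey2

lemma coveringNumber_le_card {α : Type*} (F : Set α) (dst : α → α → ℝ) (s : ℝ)
    (T : Finset α) (hT : ∀ f ∈ F, ∃ t ∈ T, dst f t ≤ s) :
    coveringNumber F dst s ≤ (T.card : ℝ≥0∞) :=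
  iInf₂_le T hT

lemma sqrtLog_le_of_le {N : ℝ≥0∞} {c : ℕ} (h : N ≤ (c : ℝ≥0∞)) :
    sqrtLog N ≤ ENNReal.ofReal (Real.sqrt (Real.log c)) := by
  unfold sqrtLog
  rw [if_neg (ne_top_of_le_ne_top (by simp) h)]
  apply ENNReal.ofReal_le_ofReal
  apply Real.sqrt_le_sqrt
  have htr : N.toReal ≤ (c : ℝ) := by
    have := ENNReal.toReal_mono (by simp) h
    simpa using this
  rcases le_or_gt N.toReal 1 with h1 | h1
  · calc Real.log N.toReal ≤ 0 := Real.log_nonpos ENNReal.toReal_nonneg h1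
      _ ≤ Real.log c := by
        rcases Nat.eq_zero_or_pos c with hc0 | hc
        · subst hc0
          simp
        · apply Real.log_nonneg
          exact_mod_cast hc
  · apply Real.log_le_log (by linarith) htr

lemma sqrt_div_s (K s : ℝ) (hK : 0 ≤ K) (hs : 0 < s) :
    Real.sqrt (K / (s * Real.sqrt s)) = Real.sqrt K * s ^ (-(3:ℝ)/4) := by
  have h1 : s * Real.sqrt s = s ^ ((3:ℝ)/2) := by
    rw [Real.sqrt_eq_rpow]
    rw [show s * s ^ ((1:ℝ)/2) = s ^ (1:ℝ) * s ^ ((1:ℝ)/2) by rw [Real.rpow_one]]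
    rw [← Real.rpow_add hs]
    norm_num
  rw [h1, Real.sqrt_div hK]
  have h2 : Real.sqrt (s ^ ((3:ℝ)/2)) = s ^ ((3:ℝ)/4) := by
    rw [Real.sqrt_eq_rpow, ← Real.rpow_mul hs.le]
    norm_num
  rw [h2, show (-(3:ℝ)/4) = -((3:ℝ)/4) by norm_num, Real.rpow_neg hs.le, div_eq_mul_inv]

lemma entropy_numeric (c s : ℝ) (hc : 0 ≤ c) (hs : 0 < s) (hs1 : s ≤ 1) :
    Real.sqrt (Real.log (((⌈4 * c ^ 2 / s ^ 2⌉₊ + 2) ^ (⌈2 * c / s⌉₊ + 1) : ℕ) : ℝ))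
      ≤ Real.sqrt ((2 * c + 2) * (4 * c ^ 2 + 7)) * s ^ (-(3:ℝ)/4) := by
  have hsq : (0:ℝ) < Real.sqrt s := Real.sqrt_pos.2 hs
  have hsq1 : Real.sqrt s ≤ 1 := by
    rw [show (1:ℝ) = Real.sqrt 1 from (Real.sqrt_one).symm]
    exact Real.sqrt_le_sqrt hs1
  have hcast : (((⌈4 * c ^ 2 / s ^ 2⌉₊ + 2) ^ (⌈2 * c / s⌉₊ + 1) : ℕ) : ℝ)
      = ((⌈4 * c ^ 2 / s ^ 2⌉₊ : ℝ) + 2) ^ (⌈2 * c / s⌉₊ + 1) := by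
    push_cast
    ring
  rw [hcast, Real.log_pow]
  -- bounds
  have hG : ((⌈2 * c / s⌉₊ : ℝ) + 1) ≤ (2 * c + 2) / s := by
    have h1 : (⌈2 * c / s⌉₊ : ℝ) < 2 * c / s + 1 :=
      Nat.ceil_lt_add_one (div_nonneg (by linarith) hs.le)
    have h2 : (1:ℝ) ≤ 1 / s := by
      rw [le_div_iff₀ hs]; linarith
    have h3 : 2 * c / s + 2 / s = (2 * c + 2) / s := by ring
    have h4 : (2:ℝ) ≤ 2 / s := by
      rw [le_div_iff₀ hs]; linarith
    linarith
  have hM : ((⌈4 * c ^ 2 / s ^ 2⌉₊ : ℝ) + 2) ≤ (4 * c ^ 2 + 3) / s ^ 2 := by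
    have h1 : (⌈4 * c ^ 2 / s ^ 2⌉₊ : ℝ) < 4 * c ^ 2 / s ^ 2 + 1 :=
      Nat.ceil_lt_add_one (by positivity)
    have h4 : (3:ℝ) ≤ 3 / s ^ 2 := by
      rw [le_div_iff₀ (by positivity)]
      nlinarith
    have h3 : 4 * c ^ 2 / s ^ 2 + 3 / s ^ 2 = (4 * c ^ 2 + 3) / s ^ 2 := by ring
    linarith
  have hlogM : Real.log ((⌈4 * c ^ 2 / s ^ 2⌉₊ : ℝ) + 2) ≤ (4 * c ^ 2 + 7) / Real.sqrt s := by
    have hpos : (0:ℝ) < (⌈4 * c ^ 2 / s ^ 2⌉₊ : ℝ) + 2 := by positivity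
    have h1 : Real.log ((⌈4 * c ^ 2 / s ^ 2⌉₊ : ℝ) + 2) ≤ Real.log ((4 * c ^ 2 + 3) / s ^ 2) :=
      Real.log_le_log hpos hM
    have h2 : Real.log ((4 * c ^ 2 + 3) / s ^ 2) = Real.log (4 * c ^ 2 + 3) - 2 * Real.log s := by
      rw [Real.log_div (by positivity) (by positivity)]
      rw [show s ^ 2 = s ^ (2:ℕ) from rfl, Real.log_pow]
      norm_num
    have h3 : Real.log (4 * c ^ 2 + 3) ≤ 4 * c ^ 2 + 3 := by
      have := Real.log_le_sub_one_of_pos (show (0:ℝ) < 4 * c ^ 2 + 3 by positivity)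
      linarith
    have h4 : - (2 * Real.log s) ≤ 4 / Real.sqrt s := by
      have hls : Real.log s = 2 * Real.log (Real.sqrt s) := by
        rw [Real.log_sqrt hs.le]; ring
      have h5 : Real.log (Real.sqrt s)⁻¹ ≤ (Real.sqrt s)⁻¹ - 1 :=
        Real.log_le_sub_one_of_pos (by positivity)
      rw [Real.log_inv] at h5
      have h6 : (Real.sqrt s)⁻¹ = 1 / Real.sqrt s := (one_div _).symm
      rw [hls]
      rw [h6] at h5
      have h8 : 4 * (1 / Real.sqrt s) = 4 / Real.sqrt s := by ring
      linarith [h5]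
    have h8 : (1:ℝ) ≤ 1 / Real.sqrt s := by
      rw [le_div_iff₀ hsq]; linarith
    have h9 : 4 * c ^ 2 + 3 ≤ (4 * c ^ 2 + 3) / Real.sqrt s := by
      rw [le_div_iff₀ hsq]
      nlinarith
    have h10 : (4 * c ^ 2 + 3) / Real.sqrt s + 4 / Real.sqrt s = (4 * c ^ 2 + 7) / Real.sqrt s := by
      ring
    linarith
  have hlogM0 : 0 ≤ Real.log ((⌈4 * c ^ 2 / s ^ 2⌉₊ : ℝ) + 2) := by
    apply Real.log_nonneg
    have : (0:ℝ) ≤ (⌈4 * c ^ 2 / s ^ 2⌉₊ : ℝ) := by positivity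
    linarith
  have hprod : ((⌈2 * c / s⌉₊ : ℝ) + 1) * Real.log ((⌈4 * c ^ 2 / s ^ 2⌉₊ : ℝ) + 2)
      ≤ ((2 * c + 2) * (4 * c ^ 2 + 7)) / (s * Real.sqrt s) := by
    have hG0 : (0:ℝ) ≤ (⌈2 * c / s⌉₊ : ℝ) + 1 := by positivity
    calc ((⌈2 * c / s⌉₊ : ℝ) + 1) * Real.log ((⌈4 * c ^ 2 / s ^ 2⌉₊ : ℝ) + 2)
        ≤ ((2 * c + 2) / s) * ((4 * c ^ 2 + 7) / Real.sqrt s) := by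
          apply mul_le_mul hG hlogM hlogM0
          positivity
      _ = ((2 * c + 2) * (4 * c ^ 2 + 7)) / (s * Real.sqrt s) := by
          field_simp
  have hfinal : ((⌈2 * c / s⌉₊ + 1 : ℕ) : ℝ) * Real.log ((⌈4 * c ^ 2 / s ^ 2⌉₊ : ℝ) + 2)
      ≤ ((2 * c + 2) * (4 * c ^ 2 + 7)) / (s * Real.sqrt s) := by
    have hc2 : ((⌈2 * c / s⌉₊ + 1 : ℕ) : ℝ) = (⌈2 * c / s⌉₊ : ℝ) + 1 := by push_cast; ring
    rw [hc2]; exact hprod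
  calc Real.sqrt (((⌈2 * c / s⌉₊ + 1 : ℕ) : ℝ) * Real.log ((⌈4 * c ^ 2 / s ^ 2⌉₊ : ℝ) + 2))
      ≤ Real.sqrt (((2 * c + 2) * (4 * c ^ 2 + 7)) / (s * Real.sqrt s)) :=
        Real.sqrt_le_sqrt hfinal
    _ = Real.sqrt ((2 * c + 2) * (4 * c ^ 2 + 7)) * s ^ (-(3:ℝ)/4) :=
        sqrt_div_s _ s (by positivity) hs

lemma lintegral_bound (C : ℝ) :
    ∫⁻ s in Set.Ioc (0:ℝ) 1, ENNReal.ofReal (C * s ^ (-(3:ℝ)/4)) ≠ ⊤ := by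
  have h0 : IntegrableOn (fun t : ℝ => t ^ (-(3:ℝ)/4)) (Set.Ioo (0:ℝ) 1) := by
    rw [intervalIntegral.integrableOn_Ioo_rpow_iff one_pos]
    norm_num
  have h1 : IntegrableOn (fun t : ℝ => C * t ^ (-(3:ℝ)/4)) (Set.Ioo (0:ℝ) 1) :=
    h0.const_mul C
  have h2 : IntegrableOn (fun t : ℝ => C * t ^ (-(3:ℝ)/4)) (Set.Ioc (0:ℝ) 1) :=
    h1.congr_set_ae Ioo_ae_eq_Ioc.symm
  have h := h2.2
  unfold MeasureTheory.HasFiniteIntegral at h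
  have hle : ∫⁻ s in Set.Ioc (0:ℝ) 1, ENNReal.ofReal (C * s ^ (-(3:ℝ)/4))
      ≤ ∫⁻ s in Set.Ioc (0:ℝ) 1, (‖C * s ^ (-(3:ℝ)/4)‖₊ : ℝ≥0∞) := by
    apply MeasureTheory.lintegral_mono
    intro s
    simp only []
    rw [← enorm_eq_nnnorm, ← ofReal_norm]
    exact ENNReal.ofReal_le_ofReal (le_abs_self _)
  exact ne_top_of_le_ne_top h.ne hle

lemma conclusion3_integral (x : (n : ℕ) → Fin n → ℝ) (a b : ℝ) (hab : a ≤ b) :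
    ∫⁻ s in Set.Ioc (0:ℝ) 1,
      ⨆ n : ℕ, sqrtLog (coveringNumber {f : ℝ → ℝ | Monotone f ∧ ∀ t : ℝ, f t ∈ Set.Icc a b}
        (distN x n) s) ≠ ⊤ := by
  set c := b - a with hc
  have hc0 : 0 ≤ c := by rw [hc]; linarith
  set C := Real.sqrt ((2 * c + 2) * (4 * c ^ 2 + 7)) with hC
  apply ne_top_of_le_ne_top (lintegral_bound C)
  apply MeasureTheory.setLIntegral_mono
  · apply Measurable.ennreal_ofReal
    apply Measurable.const_mul
    exact (measurable_id.pow_const _)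
  · intro s hs
    apply iSup_le
    intro n
    obtain ⟨T, hcard, _, hcover⟩ := net_master x a b hab s hs.1 n
    have h1 : coveringNumber {f : ℝ → ℝ | Monotone f ∧ ∀ t : ℝ, f t ∈ Set.Icc a b}
        (distN x n) s ≤ (((⌈4 * c ^ 2 / s ^ 2⌉₊ + 2) ^ (⌈2 * c / s⌉₊ + 1) : ℕ) : ℝ≥0∞) := by
      refine le_trans (coveringNumber_le_card _ _ _ T ?_) ?_
      · intro f hf
        exact hcover f hf.1 hf.2
      · exact_mod_cast Nat.cast_le.2 hcard
    refine le_trans (sqrtLog_le_of_le h1) ?_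
    apply ENNReal.ofReal_le_ofReal
    rw [hC]
    exact entropy_numeric c s hc0 hs.1 hs.2

section Comb

variable {n : ℕ}

def Vset (n n1 : ℕ) : Finset (Fin n → Bool) :=
  Finset.univ.filter (fun v => ones v = n1)

lemma ones_comp_perm (v : Fin n → Bool) (σ : Equiv.Perm (Fin n)) :
    ones (v ∘ σ) = ones v := by
  unfold ones
  apply Finset.card_bij (fun k _ => σ k)
  · intro k hk
    simp only [Finset.mem_filter, Finset.mem_univ, true_and, Function.comp] at hk ⊢
    exact hk
  · intro k1 _ k2 _ he
    exact σ.injective he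
  · intro k hk
    simp only [Finset.mem_filter, Finset.mem_univ, true_and] at hk
    refine ⟨σ.symm k, ?_, by simp⟩
    simp only [Finset.mem_filter, Finset.mem_univ, true_and, Function.comp]
    simpa [Equiv.apply_symm_apply] using hk

lemma card_filter_comp (n1 : ℕ) (p : (Fin n → Bool) → Prop) [DecidablePred p]
    (σ : Equiv.Perm (Fin n)) :
    ((Vset n n1).filter (fun v => p (v ∘ σ))).card = ((Vset n n1).filter p).card := by
  classical
  apply Finset.card_bij (fun v _ => v ∘ σ)
  · intro v hv
    obtain ⟨hv1, hv2⟩ := Finset.mem_filter.1 hv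
    apply Finset.mem_filter.2
    constructor
    · simp only [Vset, Finset.mem_filter, Finset.mem_univ, true_and] at hv1 ⊢
      rw [ones_comp_perm]
      exact hv1
    · exact hv2
  · intro v1 _ v2 _ he
    funext k
    have := congrFun he (σ.symm k)
    simpa [Function.comp, Equiv.apply_symm_apply] using this
  · intro w hw
    obtain ⟨hw1, hw2⟩ := Finset.mem_filter.1 hw
    refine ⟨w ∘ ⇑σ.symm, ?_, ?_⟩
    · apply Finset.mem_filter.2
      constructor
      · simp only [Vset, Finset.mem_filter, Finset.mem_univ, true_and] at hw1 ⊢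
        rw [ones_comp_perm]
        exact hw1
      · have : (w ∘ ⇑σ.symm) ∘ ⇑σ = w := by
          funext k; simp [Function.comp]
        rw [this]
        exact hw2
    · funext k; simp [Function.comp]

lemma N1_const (n1 : ℕ) (i i' : Fin n) :
    ((Vset n n1).filter (fun v => v i = true)).card
      = ((Vset n n1).filter (fun v => v i' = true)).card := by
  classical
  have h := card_filter_comp (n := n) n1 (fun v => v i = true) (Equiv.swap i i')
  have h3 : ((Vset n n1).filter (fun v => (v ∘ (Equiv.swap i i')) i = true))
      = ((Vset n n1).filter (fun v => v i' = true)) := by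
    apply Finset.filter_congr
    intro v _
    simp [Function.comp, Equiv.swap_apply_left]
  rw [h3] at h
  exact h.symm

lemma exists_perm_pair {i j i' j' : Fin n} (hij : i ≠ j) (hij' : i' ≠ j') :
    ∃ σ : Equiv.Perm (Fin n), σ i = i' ∧ σ j = j' := by
  classical
  have hj0 : Equiv.swap i i' j ≠ i' := by
    intro hcon
    have h1 : Equiv.swap i i' j = Equiv.swap i i' i := by
      rw [hcon, Equiv.swap_apply_left]
    exact hij ((Equiv.swap i i').injective h1).symm
  refine ⟨(Equiv.swap i i').trans (Equiv.swap (Equiv.swap i i' j) j'), ?_, ?_⟩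
  · simp only [Equiv.trans_apply, Equiv.swap_apply_left]
    exact Equiv.swap_apply_of_ne_of_ne (Ne.symm hj0) hij'
  · simp only [Equiv.trans_apply, Equiv.swap_apply_left]

lemma N2_const (n1 : ℕ) {i j i' j' : Fin n} (hij : i ≠ j) (hij' : i' ≠ j') :
    ((Vset n n1).filter (fun v => v i = true ∧ v j = true)).card
      = ((Vset n n1).filter (fun v => v i' = true ∧ v j' = true)).card := by
  classical
  obtain ⟨σ, hσi, hσj⟩ := exists_perm_pair hij hij'
  have h := card_filter_comp (n := n) n1 (fun v => v i = true ∧ v j = true) σ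
  have h3 : ((Vset n n1).filter (fun v => (v ∘ σ) i = true ∧ (v ∘ σ) j = true))
      = ((Vset n n1).filter (fun v => v i' = true ∧ v j' = true)) := by
    apply Finset.filter_congr
    intro v _
    simp [Function.comp, hσi, hσj]
  rw [h3] at h
  exact h.symm

lemma card_filter_real {α : Type*} (s : Finset α) (p : α → Prop) [DecidablePred p] :
    ((s.filter p).card : ℝ) = ∑ v ∈ s, (if p v then (1:ℝ) else 0) := by
  rw [Finset.card_filter]
  push_cast
  apply Finset.sum_congr rfl
  intro v _
  by_cases h : p v <;> simp [h]

lemma sum_N1 (n1 : ℕ) :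
    ∑ i : Fin n, (((Vset n n1).filter (fun v => v i = true)).card : ℝ)
      = (n1 : ℝ) * (Vset n n1).card := by
  classical
  calc ∑ i : Fin n, (((Vset n n1).filter (fun v => v i = true)).card : ℝ)
      = ∑ i : Fin n, ∑ v ∈ Vset n n1, (if v i = true then (1:ℝ) else 0) := by
        apply Finset.sum_congr rfl; intro i _; exact card_filter_real _ _
    _ = ∑ v ∈ Vset n n1, ∑ i : Fin n, (if v i = true then (1:ℝ) else 0) := Finset.sum_comm
    _ = ∑ v ∈ Vset n n1, (n1 : ℝ) := by
        apply Finset.sum_congr rfl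
        intro v hv
        have hones : ones v = n1 := by
          have := Finset.mem_filter.1 hv
          simpa [Vset] using this.2
        have h2 : ∑ i : Fin n, (if v i = true then (1:ℝ) else 0)
            = ((Finset.univ.filter fun i => v i = true).card : ℝ) := (card_filter_real _ _).symm
        rw [h2, show (Finset.univ.filter fun i => v i = true).card = ones v from rfl, hones]
    _ = (n1 : ℝ) * (Vset n n1).card := by
        rw [Finset.sum_const, nsmul_eq_mul]
        ring

lemma var_count (n n1 : ℕ) (hn : 0 < n) (hn1 : 0 < n1)
    (w : Fin n → ℝ) (A : ℝ) (hw : ∀ i, w i ∈ Set.Icc (0:ℝ) A) :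
    ∑ v ∈ Vset n n1, ((n1 : ℝ)⁻¹ * (∑ i ∈ Finset.univ.filter (fun i => v i = true), w i)
        - (n : ℝ)⁻¹ * ∑ i, w i) ^ 2
      ≤ (Vset n n1).card * A ^ 2 / n1 := by
  classical
  have hn1R : (0:ℝ) < (n1 : ℝ) := by exact_mod_cast hn1
  have hnR : (0:ℝ) < (n : ℝ) := by exact_mod_cast hn
  set Abar := (n : ℝ)⁻¹ * ∑ i, w i with hAbar
  set c : Fin n → ℝ := fun i => (n1 : ℝ)⁻¹ * (w i - Abar) with hcdef
  have hsumc : ∑ i, c i = 0 := by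
    rw [hcdef]
    simp only
    rw [← Finset.mul_sum, Finset.sum_sub_distrib, Finset.sum_const, Finset.card_univ,
      Fintype.card_fin, nsmul_eq_mul, hAbar]
    field_simp
    ring
  have hW : ∀ v ∈ Vset n n1,
      ((n1 : ℝ)⁻¹ * (∑ i ∈ Finset.univ.filter (fun i => v i = true), w i)
        - (n : ℝ)⁻¹ * ∑ i, w i)
      = ∑ i ∈ Finset.univ.filter (fun i => v i = true), c i := by
    intro v hv
    have hones : (Finset.univ.filter (fun i => v i = true)).card = n1 := by
      have := Finset.mem_filter.1 hv
      simpa [Vset, ones] using this.2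
    rw [hcdef]
    simp only
    rw [← Finset.mul_sum, Finset.sum_sub_distrib, Finset.sum_const, hones, nsmul_eq_mul,
      ← hAbar]
    field_simp
  have hexpand : ∀ v ∈ Vset n n1,
      (∑ i ∈ Finset.univ.filter (fun i => v i = true), c i) ^ 2
      = ∑ i, ∑ j, (if v i = true ∧ v j = true then c i * c j else 0) := by
    intro v _
    rw [sq, Finset.sum_mul_sum]
    rw [Finset.sum_filter]
    apply Finset.sum_congr rfl
    intro i _
    by_cases hvi : v i = true
    · simp only [hvi, if_true, true_and]
      exact Finset.sum_filter _ _
    · simp [hvi]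
  set N : Fin n → Fin n → ℝ := fun i j =>
    (((Vset n n1).filter (fun v => v i = true ∧ v j = true)).card : ℝ) with hN
  have hswap : ∑ v ∈ Vset n n1,
      (∑ i ∈ Finset.univ.filter (fun i => v i = true), c i) ^ 2
      = ∑ i, ∑ j, (c i * c j) * N i j := by
    calc ∑ v ∈ Vset n n1, (∑ i ∈ Finset.univ.filter (fun i => v i = true), c i) ^ 2
        = ∑ v ∈ Vset n n1, ∑ i, ∑ j, (if v i = true ∧ v j = true then c i * c j else 0) :=
          Finset.sum_congr rfl hexpand
      _ = ∑ i, ∑ v ∈ Vset n n1, ∑ j, (if v i = true ∧ v j = true then c i * c j else 0) :=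
          Finset.sum_comm
      _ = ∑ i, ∑ j, ∑ v ∈ Vset n n1, (if v i = true ∧ v j = true then c i * c j else 0) := by
          apply Finset.sum_congr rfl
          intro i _
          exact Finset.sum_comm
      _ = ∑ i, ∑ j, (c i * c j) * N i j := by
          apply Finset.sum_congr rfl
          intro i _
          apply Finset.sum_congr rfl
          intro j _
          rw [← Finset.sum_filter, Finset.sum_const, nsmul_eq_mul, hN]
          simp only
          ring
  have hsplit : ∑ i, ∑ j, (c i * c j) * N i j
      = ∑ i, (c i) ^ 2 * N i i + ∑ i, ∑ j ∈ Finset.univ.erase i, (c i * c j) * N i j := by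
    rw [← Finset.sum_add_distrib]
    apply Finset.sum_congr rfl
    intro i _
    rw [← Finset.add_sum_erase _ _ (Finset.mem_univ i)]
    congr 1
    ring
  set i0 : Fin n := ⟨0, hn⟩ with hi0
  set N1R : ℝ := (((Vset n n1).filter (fun v => v i0 = true)).card : ℝ) with hN1R
  have hNdiag : ∀ i : Fin n, N i i = N1R := by
    intro i
    rw [hN, hN1R]
    simp only
    have h1 : ((Vset n n1).filter (fun v => v i = true ∧ v i = true))
        = ((Vset n n1).filter (fun v => v i = true)) := by
      apply Finset.filter_congr
      intro v _
      simp
    rw [h1]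
    exact_mod_cast N1_const n1 i i0
  have hdiag : ∑ i, (c i) ^ 2 * N i i = N1R * ∑ i, (c i) ^ 2 := by
    rw [Finset.mul_sum]
    apply Finset.sum_congr rfl
    intro i _
    rw [hNdiag i]
    ring
  have hoff : ∑ i, ∑ j ∈ Finset.univ.erase i, (c i * c j) * N i j ≤ 0 := by
    by_cases hn2 : 2 ≤ n
    · set j0 : Fin n := ⟨1, by omega⟩ with hj0
      have hij0 : i0 ≠ j0 := by
        rw [hi0, hj0]
        intro hcon
        have := congrArg Fin.val hcon
        simp at this
      set K : ℝ := N i0 j0 with hK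
      have hK0 : 0 ≤ K := by rw [hK, hN]; positivity
      have hconst : ∀ i : Fin n, ∀ j ∈ Finset.univ.erase i, N i j = K := by
        intro i j hj
        have hji : j ≠ i := (Finset.mem_erase.1 hj).1
        rw [hN, hK, hN]
        simp only
        exact_mod_cast N2_const n1 (Ne.symm hji) hij0
      have heval : ∑ i, ∑ j ∈ Finset.univ.erase i, (c i * c j) * N i j
          = K * (- ∑ i, (c i) ^ 2) := by
        have h1 : ∀ i : Fin n, ∑ j ∈ Finset.univ.erase i, (c i * c j) * N i j
            = K * (c i * (- c i)) := by
          intro i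
          have h2 : ∑ j ∈ Finset.univ.erase i, (c i * c j) * N i j
              = ∑ j ∈ Finset.univ.erase i, K * (c i * c j) := by
            apply Finset.sum_congr rfl
            intro j hj
            rw [hconst i j hj]
            ring
          rw [h2, ← Finset.mul_sum, ← Finset.mul_sum]
          congr 1
          rw [Finset.sum_erase_eq_sub (Finset.mem_univ i), hsumc]
          ring
        rw [Finset.sum_congr rfl (fun i _ => h1 i), ← Finset.mul_sum]
        congr 1
        rw [← Finset.sum_neg_distrib]
        apply Finset.sum_congr rfl
        intro i _
        ring
      rw [heval]
      have h3 : 0 ≤ ∑ i, (c i) ^ 2 := Finset.sum_nonneg (fun i _ => sq_nonneg _)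
      nlinarith
    · apply le_of_eq
      apply Finset.sum_eq_zero
      intro i _
      apply Finset.sum_eq_zero
      intro j hj
      have hn1' : n = 1 := by omega
      subst hn1'
      exact absurd (Subsingleton.elim j i) (Finset.mem_erase.1 hj).1
  -- bound on N1R
  have hN1val : (n : ℝ) * N1R = (n1 : ℝ) * (Vset n n1).card := by
    have hs := sum_N1 (n := n) n1
    have hconst : ∀ i : Fin n,
        (((Vset n n1).filter (fun v => v i = true)).card : ℝ) = N1R := by
      intro i
      rw [hN1R]
      exact_mod_cast N1_const n1 i i0
    rw [Finset.sum_congr rfl (fun i _ => hconst i), Finset.sum_const, Finset.card_univ,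
      Fintype.card_fin, nsmul_eq_mul] at hs
    exact hs
  have hN1nonneg : 0 ≤ N1R := by rw [hN1R]; positivity
  -- bound on sum of c squared
  have hAbar0 : 0 ≤ Abar := by
    rw [hAbar]
    apply mul_nonneg (by positivity)
    exact Finset.sum_nonneg (fun i _ => (hw i).1)
  have hAbarA : Abar ≤ A := by
    rw [hAbar]
    have h1 : ∑ i, w i ≤ ∑ _i : Fin n, A := Finset.sum_le_sum (fun i _ => (hw i).2)
    rw [Finset.sum_const, Finset.card_univ, Fintype.card_fin, nsmul_eq_mul] at h1
    rw [inv_mul_le_iff₀ hnR]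
    linarith
  have hsumc2 : ∑ i, (c i) ^ 2 ≤ (n : ℝ) * (A ^ 2 / n1 ^ 2) := by
    have h1 : ∀ i : Fin n, (c i) ^ 2 ≤ A ^ 2 / n1 ^ 2 := by
      intro i
      rw [hcdef]
      simp only
      have h2 : (w i - Abar) ^ 2 ≤ A ^ 2 := by
        have := (hw i).1
        have := (hw i).2
        nlinarith
      rw [mul_pow]
      have h3 : ((n1:ℝ)⁻¹) ^ 2 = 1 / n1 ^ 2 := by field_simp
      rw [h3]
      rw [div_eq_mul_inv, div_eq_mul_inv]
      calc 1 / (n1:ℝ) ^ 2 * (w i - Abar) ^ 2 ≤ 1 / (n1:ℝ) ^ 2 * A ^ 2 := by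
            apply mul_le_mul_of_nonneg_left h2 (by positivity)
        _ = A ^ 2 * ((n1:ℝ) ^ 2)⁻¹ := by ring
    calc ∑ i, (c i) ^ 2 ≤ ∑ _i : Fin n, A ^ 2 / (n1:ℝ) ^ 2 :=
          Finset.sum_le_sum (fun i _ => h1 i)
      _ = (n : ℝ) * (A ^ 2 / n1 ^ 2) := by
          rw [Finset.sum_const, Finset.card_univ, Fintype.card_fin, nsmul_eq_mul]
  -- final assembly
  calc ∑ v ∈ Vset n n1, ((n1 : ℝ)⁻¹ * (∑ i ∈ Finset.univ.filter (fun i => v i = true), w i)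
        - (n : ℝ)⁻¹ * ∑ i, w i) ^ 2
      = ∑ v ∈ Vset n n1, (∑ i ∈ Finset.univ.filter (fun i => v i = true), c i) ^ 2 := by
        apply Finset.sum_congr rfl
        intro v hv
        rw [hW v hv]
    _ = ∑ i, ∑ j, (c i * c j) * N i j := hswap
    _ = ∑ i, (c i) ^ 2 * N i i + ∑ i, ∑ j ∈ Finset.univ.erase i, (c i * c j) * N i j := hsplit
    _ ≤ N1R * ∑ i, (c i) ^ 2 := by
        rw [hdiag] at *
        linarith [hoff, hdiag]
    _ ≤ N1R * ((n : ℝ) * (A ^ 2 / n1 ^ 2)) := by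
        apply mul_le_mul_of_nonneg_left hsumc2 hN1nonneg
    _ ≤ (Vset n n1).card * A ^ 2 / n1 := by
        have hNval : N1R = (n1 : ℝ) * (Vset n n1).card / n := by
          field_simp at hN1val ⊢
          linarith [hN1val]
        rw [hNval]
        apply le_of_eq
        field_simp

lemma exists_ones (n k : ℕ) (hk : k ≤ n) : ∃ v : Fin n → Bool, ones v = k := by
  classical
  refine ⟨fun i => decide ((i : ℕ) < k), ?_⟩
  unfold ones
  have h1 : (Finset.univ.filter fun i : Fin n => (decide ((i : ℕ) < k)) = true)
      = Finset.univ.filter (fun i : Fin n => (i : ℕ) < k) := by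
    apply Finset.filter_congr
    intro i _
    simp
  rw [h1]
  have h2 : (Finset.univ.filter (fun i : Fin n => (i : ℕ) < k)).card
      = (Finset.univ : Finset (Fin k)).card := by
    apply Finset.card_bij (fun (i : Fin n) (hi : i ∈ Finset.univ.filter
      (fun i : Fin n => (i : ℕ) < k)) =>
      (⟨(i : ℕ), by simpa using (Finset.mem_filter.1 hi).2⟩ : Fin k))
    · intro i hi
      exact Finset.mem_univ _
    · intro i1 h1' i2 h2' he
      apply Fin.ext
      simpa [Fin.mk.injEq] using he
    · intro j _
      refine ⟨⟨(j : ℕ), lt_of_lt_of_le j.2 hk⟩, ?_, ?_⟩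
      · simp only [Finset.mem_filter, Finset.mem_univ, true_and]
        exact j.2
      · apply Fin.ext
        rfl
  rw [h2]
  simp

lemma cheb_measure {Ω : Type} [MeasurableSpace Ω] (P : Measure Ω) [IsProbabilityMeasure P]
    (Z : (n : ℕ) → Ω → Fin n → Bool) (n1 : ℕ → ℕ) (hCRD : IsCRD P Z n1) (n : ℕ)
    (hn : 0 < n) (hn1 : 0 < n1 n) (hn1n : n1 n ≤ n)
    (w : Fin n → ℝ) (A : ℝ) (hw : ∀ i, w i ∈ Set.Icc (0:ℝ) A) (ε : ℝ) (hε : 0 < ε) :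
    P {ω | ε ≤ |(n1 n : ℝ)⁻¹ * (∑ i ∈ Finset.univ.filter (fun i => Z n ω i = true), w i)
        - (n : ℝ)⁻¹ * ∑ i, w i|}
      ≤ ENNReal.ofReal (A ^ 2 / (n1 n * ε ^ 2)) := by
  classical
  obtain ⟨hZmeas, hones1, hexch⟩ := hCRD n
  set W : (Fin n → Bool) → ℝ := fun v =>
    (n1 n : ℝ)⁻¹ * (∑ i ∈ Finset.univ.filter (fun i => v i = true), w i)
      - (n : ℝ)⁻¹ * ∑ i, w i with hWdef
  have hmeasv : ∀ v : Fin n → Bool, MeasurableSet {ω | Z n ω = v} := by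
    intro v
    exact hZmeas (measurableSet_singleton v)
  have hcover : {ω | ones (Z n ω) = n1 n} = ⋃ v ∈ Vset n (n1 n), {ω | Z n ω = v} := by
    ext ω
    simp only [Set.mem_setOf_eq, Set.mem_iUnion]
    constructor
    · intro h
      exact ⟨Z n ω, by simp [Vset, h], rfl⟩
    · rintro ⟨v, hv, hZv⟩
      rw [hZv]
      simpa [Vset] using hv
  have hsum1 : ∑ v ∈ Vset n (n1 n), P {ω | Z n ω = v} = 1 := by
    rw [← MeasureTheory.measure_biUnion_finset ?_ (fun v _ => hmeasv v), ← hcover, hones1]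
    intro v hv v' hv' hvv'
    apply Set.disjoint_left.2
    intro ω h1 h2
    exact hvv' (h1.symm.trans h2)
  obtain ⟨v0, hv0ones⟩ := exists_ones n (n1 n) hn1n
  have hv0 : v0 ∈ Vset n (n1 n) := by simp [Vset, hv0ones]
  have hVpos : 0 < (Vset n (n1 n)).card := Finset.card_pos.2 ⟨v0, hv0⟩
  set p0 := P {ω | Z n ω = v0} with hp0
  have hpconst : ∀ v ∈ Vset n (n1 n), P {ω | Z n ω = v} = p0 := by
    intro v hv
    apply hexch
    · simpa [Vset] using (Finset.mem_filter.1 hv).2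
    · exact hv0ones
  have hcardp : ((Vset n (n1 n)).card : ℝ≥0∞) * p0 = 1 := by
    rw [← hsum1, Finset.sum_congr rfl hpconst, Finset.sum_const, nsmul_eq_mul]
  set Bad := (Vset n (n1 n)).filter (fun v => ε ≤ |W v|) with hBad
  have hsub : {ω | ε ≤ |(n1 n : ℝ)⁻¹ * (∑ i ∈ Finset.univ.filter
        (fun i => Z n ω i = true), w i) - (n : ℝ)⁻¹ * ∑ i, w i|}
      ⊆ (⋃ v ∈ Bad, {ω | Z n ω = v}) ∪ {ω | ones (Z n ω) = n1 n}ᶜ := by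
    intro ω hω
    by_cases ho : ones (Z n ω) = n1 n
    · left
      refine Set.mem_biUnion ?_ rfl
      rw [hBad]
      apply Finset.mem_filter.2
      refine ⟨by simp [Vset, ho], ?_⟩
      exact hω
    · right
      exact ho
  have hcompl0 : P ({ω | ones (Z n ω) = n1 n}ᶜ) = 0 := by
    have hms : MeasurableSet {ω | ones (Z n ω) = n1 n} := by
      rw [hcover]
      exact (Vset n (n1 n)).measurableSet_biUnion (fun v _ => hmeasv v)
    rw [measure_compl hms (measure_ne_top P _), hones1]
    simp
  have hvar := var_count n (n1 n) hn hn1 w A hw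
  have hcount : ((Bad.card : ℝ)) * ε ^ 2 ≤ (Vset n (n1 n)).card * A ^ 2 / n1 n := by
    calc (Bad.card : ℝ) * ε ^ 2 = ∑ _v ∈ Bad, ε ^ 2 := by
          rw [Finset.sum_const, nsmul_eq_mul]
      _ ≤ ∑ v ∈ Bad, (W v) ^ 2 := by
          apply Finset.sum_le_sum
          intro v hv
          have h1 : ε ≤ |W v| := (Finset.mem_filter.1 hv).2
          calc ε ^ 2 ≤ |W v| ^ 2 := by
                apply pow_le_pow_left₀ hε.le h1
            _ = (W v) ^ 2 := sq_abs _
      _ ≤ ∑ v ∈ Vset n (n1 n), (W v) ^ 2 := by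
          apply Finset.sum_le_sum_of_subset_of_nonneg (Finset.filter_subset _ _)
          intro v _ _
          exact sq_nonneg _
      _ ≤ (Vset n (n1 n)).card * A ^ 2 / n1 n := hvar
  have hPE : P {ω | ε ≤ |(n1 n : ℝ)⁻¹ * (∑ i ∈ Finset.univ.filter
        (fun i => Z n ω i = true), w i) - (n : ℝ)⁻¹ * ∑ i, w i|}
      ≤ (Bad.card : ℝ≥0∞) * p0 := by
    refine le_trans (measure_mono hsub) ?_
    refine le_trans (measure_union_le _ _) ?_
    rw [hcompl0, add_zero]
    refine le_trans (measure_biUnion_finset_le _ _) ?_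
    rw [Finset.sum_congr rfl (fun v hv => hpconst v (Finset.mem_of_mem_filter v hv)),
      Finset.sum_const, nsmul_eq_mul]
  have hfinal : (Bad.card : ℝ≥0∞) * p0 ≤ ENNReal.ofReal (A ^ 2 / (n1 n * ε ^ 2)) := by
    have hn1R : (0:ℝ) < (n1 n : ℝ) := by exact_mod_cast hn1
    have hreal : (Bad.card : ℝ) ≤ (Vset n (n1 n)).card * (A ^ 2 / (n1 n * ε ^ 2)) := by
      have hε2 : (0:ℝ) < ε ^ 2 := by positivity
      have h3 := (le_div_iff₀ hε2).2 hcount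
      calc (Bad.card : ℝ) ≤ ((Vset n (n1 n)).card * A ^ 2 / n1 n) / ε ^ 2 := h3
        _ = (Vset n (n1 n)).card * (A ^ 2 / (n1 n * ε ^ 2)) := by
            field_simp
    have henn : (Bad.card : ℝ≥0∞) ≤ ((Vset n (n1 n)).card : ℝ≥0∞)
        * ENNReal.ofReal (A ^ 2 / (n1 n * ε ^ 2)) := by
      have h1 : ((Bad.card : ℝ≥0∞)) = ENNReal.ofReal ((Bad.card : ℝ)) := by
        rw [ENNReal.ofReal_natCast]
      have h2 : (((Vset n (n1 n)).card : ℕ) : ℝ≥0∞)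
          = ENNReal.ofReal (((Vset n (n1 n)).card : ℝ)) := by
        rw [ENNReal.ofReal_natCast]
      rw [h1, h2, ← ENNReal.ofReal_mul (by positivity)]
      exact ENNReal.ofReal_le_ofReal hreal
    calc (Bad.card : ℝ≥0∞) * p0
        ≤ (((Vset n (n1 n)).card : ℝ≥0∞) * ENNReal.ofReal (A ^ 2 / (n1 n * ε ^ 2))) * p0 :=
          mul_le_mul_left henn p0
      _ = (((Vset n (n1 n)).card : ℝ≥0∞) * p0) * ENNReal.ofReal (A ^ 2 / (n1 n * ε ^ 2)) := by
          ring
      _ = ENNReal.ofReal (A ^ 2 / (n1 n * ε ^ 2)) := by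
          rw [hcardp, one_mul]
  exact le_trans hPE hfinal

end Comb

lemma combo_mono {f g : ℝ → ℝ} (hf : Monotone f) (hg : Monotone g) (t : ℝ)
    (h0 : 0 ≤ t) (h1 : t ≤ 1) : Monotone (fun s => f s + t * (g s - f s)) := by
  intro u v huv
  simp only
  have h2 := hf huv
  have h3 := hg huv
  nlinarith

lemma combo_range {f g : ℝ → ℝ} {a b : ℝ} (hf : ∀ s, f s ∈ Set.Icc a b)
    (hg : ∀ s, g s ∈ Set.Icc a b) (t : ℝ) (h0 : 0 ≤ t) (h1 : t ≤ 1) :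
    ∀ s, (fun s => f s + t * (g s - f s)) s ∈ Set.Icc a b := by
  intro s
  obtain ⟨h2, h3⟩ := hf s
  obtain ⟨h4, h5⟩ := hg s
  constructor
  · simp only
    nlinarith
  · simp only
    nlinarith

lemma pop_fit_exists (n : ℕ) (x : Fin n → ℝ) (y : Fin n → ℝ) (a b : ℝ) (hab : a ≤ b) :
    ∃ μ : ℝ → ℝ, Monotone μ ∧ (∀ t, μ t ∈ Set.Icc a b) ∧
      ∀ g : ℝ → ℝ, Monotone g → (∀ t, g t ∈ Set.Icc a b) →
        ∑ i, (y i - μ (x i)) ^ 2 ≤ ∑ i, (y i - g (x i)) ^ 2 := by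
  classical
  set D : Set (Fin n → ℝ) :=
    {v | (∀ i j, x i ≤ x j → v i ≤ v j) ∧ ∀ i, v i ∈ Set.Icc a b} with hD
  have hDne : D.Nonempty := ⟨fun _ => a, fun _ _ _ => le_rfl, fun _ => ⟨le_rfl, hab⟩⟩
  have hDclosed : IsClosed D := by
    have h1 : D = (⋂ i, ⋂ j, {v : Fin n → ℝ | x i ≤ x j → v i ≤ v j})
        ∩ ⋂ i, {v : Fin n → ℝ | v i ∈ Set.Icc a b} := by
      ext v
      simp only [hD, Set.mem_setOf_eq, Set.mem_inter_iff, Set.mem_iInter]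
    rw [h1]
    apply IsClosed.inter
    · apply isClosed_iInter
      intro i
      apply isClosed_iInter
      intro j
      by_cases hxij : x i ≤ x j
      · have : {v : Fin n → ℝ | x i ≤ x j → v i ≤ v j} = {v | v i ≤ v j} := by
          ext v; simp [hxij]
        rw [this]
        exact isClosed_le (continuous_apply i) (continuous_apply j)
      · have : {v : Fin n → ℝ | x i ≤ x j → v i ≤ v j} = Set.univ := by
          ext v; simp [hxij]
        rw [this]
        exact isClosed_univ
    · apply isClosed_iInter
      intro i
      exact IsClosed.preimage (continuous_apply i) isClosed_Icc
  have hDcompact : IsCompact D := by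
    apply IsCompact.of_isClosed_subset (isCompact_univ_pi (fun _ => isCompact_Icc)) hDclosed
    intro v hv
    exact fun i (_ : i ∈ Set.univ) => hv.2 i
  have hcont : Continuous (fun v : Fin n → ℝ => ∑ i, (y i - v i) ^ 2) := by
    apply continuous_finset_sum
    intro i _
    exact (continuous_const.sub (continuous_apply i)).pow 2
  obtain ⟨v, hvD, hvmin⟩ := hDcompact.exists_isMinOn hDne hcont.continuousOn
  set μ : ℝ → ℝ := fun t =>
    if h : (Finset.univ.filter (fun i => x i ≤ t)).Nonempty
    then (Finset.univ.filter (fun i => x i ≤ t)).sup' h v else a with hμ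
  have hμval : ∀ i, μ (x i) = v i := by
    intro i
    have hine : i ∈ Finset.univ.filter (fun j => x j ≤ x i) := by
      simp only [Finset.mem_filter, Finset.mem_univ, true_and]
      exact le_rfl
    have hne : (Finset.univ.filter (fun j => x j ≤ x i)).Nonempty := ⟨i, hine⟩
    rw [hμ]
    simp only [dif_pos hne]
    apply le_antisymm
    · apply Finset.sup'_le
      intro j hj
      exact hvD.1 j i (by simpa using (Finset.mem_filter.1 hj).2)
    · exact Finset.le_sup' v hine
  have hμmono : Monotone μ := by
    intro t t' htt'
    rw [hμ]
    simp only
    by_cases h1 : (Finset.univ.filter (fun i => x i ≤ t)).Nonempty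
    · have hsub : Finset.univ.filter (fun i => x i ≤ t)
          ⊆ Finset.univ.filter (fun i => x i ≤ t') := by
        intro i hi
        simp only [Finset.mem_filter, Finset.mem_univ, true_and] at hi ⊢
        linarith
      have h2 : (Finset.univ.filter (fun i => x i ≤ t')).Nonempty := h1.mono hsub
      rw [dif_pos h1, dif_pos h2]
      apply Finset.sup'_le
      intro i hi
      exact Finset.le_sup' v (hsub hi)
    · rw [dif_neg h1]
      by_cases h2 : (Finset.univ.filter (fun i => x i ≤ t')).Nonempty
      · rw [dif_pos h2]
        obtain ⟨i, hi⟩ := h2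
        exact le_trans (hvD.2 i).1 (Finset.le_sup' v hi)
      · rw [dif_neg h2]
  have hμrange : ∀ t, μ t ∈ Set.Icc a b := by
    intro t
    rw [hμ]
    simp only
    by_cases h1 : (Finset.univ.filter (fun i => x i ≤ t)).Nonempty
    · rw [dif_pos h1]
      constructor
      · obtain ⟨i, hi⟩ := h1
        exact le_trans (hvD.2 i).1 (Finset.le_sup' v hi)
      · apply Finset.sup'_le
        intro i _
        exact (hvD.2 i).2
    · rw [dif_neg h1]
      exact ⟨le_rfl, hab⟩
  refine ⟨μ, hμmono, hμrange, ?_⟩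
  intro g hg hgr
  have hgD : (fun i => g (x i)) ∈ D := by
    constructor
    · intro i j hij
      exact hg hij
    · intro i
      exact hgr (x i)
  have h1 : ∑ i, (y i - v i) ^ 2 ≤ ∑ i, (y i - g (x i)) ^ 2 := hvmin hgD
  calc ∑ i, (y i - μ (x i)) ^ 2 = ∑ i, (y i - v i) ^ 2 := by
        apply Finset.sum_congr rfl
        intro i _
        rw [hμval i]
    _ ≤ ∑ i, (y i - g (x i)) ^ 2 := h1

lemma abs_sum_sq_diff {n : ℕ} (S : Finset (Fin n)) (y u v : Fin n → ℝ) (B : ℝ) (hB : 0 ≤ B)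
    (hu : ∀ i ∈ S, |y i - u i| ≤ B) (hv : ∀ i ∈ S, |y i - v i| ≤ B) :
    |∑ i ∈ S, (y i - u i) ^ 2 - ∑ i ∈ S, (y i - v i) ^ 2|
      ≤ 2 * B * ∑ i ∈ S, |u i - v i| := by
  rw [← Finset.sum_sub_distrib]
  refine le_trans (Finset.abs_sum_le_sum_abs _ _) ?_
  rw [Finset.mul_sum]
  apply Finset.sum_le_sum
  intro i hi
  have h1 : (y i - u i) ^ 2 - (y i - v i) ^ 2 = ((y i - u i) + (y i - v i)) * (v i - u i) := by
    ring
  rw [h1, abs_mul]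
  have h2 : |(y i - u i) + (y i - v i)| ≤ 2 * B := by
    calc |(y i - u i) + (y i - v i)| ≤ |y i - u i| + |y i - v i| := abs_add_le _ _
      _ ≤ 2 * B := by linarith [hu i hi, hv i hi]
  have h3 : |v i - u i| = |u i - v i| := abs_sub_comm _ _
  rw [h3]
  exact mul_le_mul_of_nonneg_right h2 (abs_nonneg _)

lemma sum_abs_le_sqrt {n : ℕ} (hn : 0 < n) (d : Fin n → ℝ) :
    ∑ i, |d i| ≤ (n : ℝ) * Real.sqrt ((n : ℝ)⁻¹ * ∑ i, (d i) ^ 2) := by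
  have hnR : (0:ℝ) < (n : ℝ) := by exact_mod_cast hn
  have h1 : (∑ i, |d i|) ^ 2 ≤ (n : ℝ) * ∑ i, (d i) ^ 2 := by
    have := sq_sum_le_card_mul_sum_sq (s := (Finset.univ : Finset (Fin n))) (f := fun i => |d i|)
    simp only [Finset.card_univ, Fintype.card_fin, sq_abs] at this
    exact this
  have h2 : (n : ℝ) * Real.sqrt ((n : ℝ)⁻¹ * ∑ i, (d i) ^ 2)
      = Real.sqrt ((n : ℝ) * ∑ i, (d i) ^ 2) := by
    have e1 : Real.sqrt (((n : ℝ)) ^ 2 * ((n : ℝ)⁻¹ * ∑ i, (d i) ^ 2))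
        = (n : ℝ) * Real.sqrt ((n : ℝ)⁻¹ * ∑ i, (d i) ^ 2) := by
      rw [Real.sqrt_mul (sq_nonneg ((n : ℝ))) ((n : ℝ)⁻¹ * ∑ i, (d i) ^ 2),
        Real.sqrt_sq hnR.le]
    rw [← e1]
    congr 1
    field_simp
  rw [h2]
  calc ∑ i, |d i| = Real.sqrt ((∑ i, |d i|) ^ 2) :=
        (Real.sqrt_sq (Finset.sum_nonneg (fun i _ => abs_nonneg _))).symm
    _ ≤ Real.sqrt ((n : ℝ) * ∑ i, (d i) ^ 2) := Real.sqrt_le_sqrt h1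

lemma ones_compl_zero {Ω : Type} [MeasurableSpace Ω] (P : Measure Ω) [IsProbabilityMeasure P]
    (Z : (n : ℕ) → Ω → Fin n → Bool) (n1 : ℕ → ℕ) (hCRD : IsCRD P Z n1) (n : ℕ) :
    P ({ω | ones (Z n ω) = n1 n}ᶜ) = 0 := by
  obtain ⟨hZmeas, hones1, _⟩ := hCRD n
  have hms : MeasurableSet {ω | ones (Z n ω) = n1 n} := by
    have h1 : {ω | ones (Z n ω) = n1 n} = Z n ⁻¹' {v | ones v = n1 n} := rfl
    rw [h1]
    exact hZmeas ((Set.toFinite _).measurableSet)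
  rw [measure_compl hms (measure_ne_top P _), hones1]
  simp

set_option maxHeartbeats 2000000 in
lemma conclusion2 {Ω : Type} [MeasurableSpace Ω] (P : Measure Ω) [IsProbabilityMeasure P]
    (Z : (n : ℕ) → Ω → Fin n → Bool) (n1 : ℕ → ℕ)
    (pmin pmax : ℝ) (hpmin : 0 < pmin) (hpmax : pmax < 1)
    (hp : ∀ n : ℕ, 0 < n → pmin ≤ (n1 n : ℝ) / n ∧ (n1 n : ℝ) / n ≤ pmax)
    (hCRD : IsCRD P Z n1)
    (x : (n : ℕ) → Fin n → ℝ) (y1 : (n : ℕ) → Fin n → ℝ)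
    (a b : ℝ) (hab : a ≤ b) (hy : ∀ n i, y1 n i ∈ Set.Icc a b)
    (μh1 : (n : ℕ) → Ω → ℝ → ℝ)
    (hmono : ∀ n ω, Monotone (μh1 n ω))
    (hrange : ∀ n ω s, μh1 n ω s ∈ Set.Icc a b)
    (hmin : ∀ n ω, ∀ μ : ℝ → ℝ, Monotone μ → (∀ s, μ s ∈ Set.Icc a b) →
      (n1 n : ℝ)⁻¹ * ∑ i ∈ Finset.univ.filter (fun i => Z n ω i = true),
        (y1 n i - μh1 n ω (x n i)) ^ 2
      ≤ (n1 n : ℝ)⁻¹ * ∑ i ∈ Finset.univ.filter (fun i => Z n ω i = true),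
        (y1 n i - μ (x n i)) ^ 2) :
    ∃ μs : (n : ℕ) → ℝ → ℝ,
      TendstoInProb P (fun n ω => distN x n (μh1 n ω) (μs n)) := by
  classical
  have hpop : ∀ n : ℕ, ∃ μ : ℝ → ℝ, Monotone μ ∧ (∀ t, μ t ∈ Set.Icc a b) ∧
      ∀ g : ℝ → ℝ, Monotone g → (∀ t, g t ∈ Set.Icc a b) →
        ∑ i, (y1 n i - μ (x n i)) ^ 2 ≤ ∑ i, (y1 n i - g (x n i)) ^ 2 :=
    fun n => pop_fit_exists n (x n) (y1 n) a b hab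
  choose μs hμsmono hμsrange hμsmin using hpop
  refine ⟨μs, ?_⟩
  intro ε hε
  set B : ℝ := b - a + 1 with hB
  have hB1 : 1 ≤ B := by rw [hB]; linarith
  have hB0 : 0 < B := by linarith
  set CL : ℝ := 2 * B * (1 + 1 / pmin) with hCL
  have hCL0 : 0 < CL := by rw [hCL]; positivity
  set ε' : ℝ := ε ^ 2 / 4 with hε'
  have hε'0 : 0 < ε' := by rw [hε']; positivity
  set δ : ℝ := min 1 (ε ^ 2 / (4 * (CL + 1))) with hδ
  have hδ0 : 0 < δ := by
    rw [hδ]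
    apply lt_min one_pos
    positivity
  have hδ1 : δ ≤ 1 := min_le_left _ _
  have hδCL : CL * δ ≤ ε ^ 2 / 4 := by
    have h1 : δ ≤ ε ^ 2 / (4 * (CL + 1)) := min_le_right _ _
    calc CL * δ ≤ (CL + 1) * (ε ^ 2 / (4 * (CL + 1))) := by
          apply mul_le_mul (by linarith) h1 hδ0.le (by linarith)
      _ = ε ^ 2 / 4 := by
          field_simp
  set Ncard : ℕ := (⌈4 * (b - a) ^ 2 / δ ^ 2⌉₊ + 2) ^ (⌈2 * (b - a) / δ⌉₊ + 1) with hNcard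
  have hnet : ∀ n : ℕ, ∃ T : Finset (ℝ → ℝ), T.card ≤ Ncard ∧
      (∀ g ∈ T, ∀ t : ℝ, g t ∈ Set.Icc a (b + δ)) ∧
      (∀ f : ℝ → ℝ, Monotone f → (∀ t : ℝ, f t ∈ Set.Icc a b) →
        ∃ g ∈ T, distN x n f g ≤ δ) :=
    fun n => net_master x a b hab δ hδ0 n
  choose T hTcard hTrange hTcover using hnet
  set C : ℝ := ((Ncard : ℝ) + 1) * (B ^ 2) ^ 2 / (pmin * ε' ^ 2) with hC
  clear_value B CL ε' δ Ncard C
  have hbound : ∀ n : ℕ, 1 ≤ n →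
      P {ω | ε ≤ |distN x n (μh1 n ω) (μs n)|} ≤ ENNReal.ofReal (C / n) := by
    intro n hn
    have hn0 : 0 < n := hn
    have hnR : (0:ℝ) < (n : ℝ) := by exact_mod_cast hn
    obtain ⟨hp1, hp2⟩ := hp n hn0
    have hn1pos : 0 < n1 n := by
      rcases Nat.eq_zero_or_pos (n1 n) with h0 | h
      · rw [h0] at hp1
        norm_num at hp1
        linarith
      · exact h
    have hn1R : (0:ℝ) < (n1 n : ℝ) := by exact_mod_cast hn1pos
    have hn1len : n1 n ≤ n := by
      by_contra hcon
      push_neg at hcon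
      have h1 : (1:ℝ) < (n1 n : ℝ) / n := by
        rw [lt_div_iff₀ hnR, one_mul]
        exact_mod_cast hcon
      linarith
    have hpminn : pmin * n ≤ (n1 n : ℝ) := by
      have := (le_div_iff₀ hnR).1 hp1
      linarith
    have hn_n1 : (n : ℝ) / (n1 n : ℝ) ≤ 1 / pmin := by
      rw [div_le_div_iff₀ hn1R hpmin]
      nlinarith
    -- uniform bounds for all candidate functions
    have habs : ∀ g : ℝ → ℝ, (∀ t, g t ∈ Set.Icc a (b + δ)) →
        ∀ i, |y1 n i - g (x n i)| ≤ B := by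
      intro g hgr i
      obtain ⟨hy1, hy2⟩ := hy n i
      obtain ⟨hg1, hg2⟩ := hgr (x n i)
      rw [abs_le]
      constructor
      · rw [hB]; linarith
      · rw [hB]; linarith
    have habsμs : ∀ i, |y1 n i - μs n (x n i)| ≤ B := by
      intro i
      obtain ⟨hy1, hy2⟩ := hy n i
      obtain ⟨hg1, hg2⟩ := hμsrange n (x n i)
      rw [abs_le]
      constructor
      · rw [hB]; linarith
      · rw [hB]; linarith
    have habsf : ∀ ω i, |y1 n i - μh1 n ω (x n i)| ≤ B := by
      intro ω i
      obtain ⟨hy1, hy2⟩ := hy n i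
      obtain ⟨hg1, hg2⟩ := hrange n ω (x n i)
      rw [abs_le]
      constructor
      · rw [hB]; linarith
      · rw [hB]; linarith
    -- event inclusion
    have hincl : {ω | ε ≤ |distN x n (μh1 n ω) (μs n)|}
        ⊆ (⋃ g ∈ insert (μs n) (T n), {ω | ε' ≤ |(n1 n : ℝ)⁻¹ * (∑ i ∈ Finset.univ.filter
              (fun i => Z n ω i = true), (y1 n i - g (x n i)) ^ 2)
            - (n : ℝ)⁻¹ * ∑ i, (y1 n i - g (x n i)) ^ 2|})
          ∪ {ω | ones (Z n ω) = n1 n}ᶜ := by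
      intro ω hω
      have hωd : ε ≤ distN x n (μh1 n ω) (μs n) := by
        have h0 : (0:ℝ) ≤ distN x n (μh1 n ω) (μs n) := Real.sqrt_nonneg _
        have h1 : ε ≤ |distN x n (μh1 n ω) (μs n)| := hω
        rwa [abs_of_nonneg h0] at h1
      by_cases hgood : ones (Z n ω) = n1 n
      swap
      · right
        exact hgood
      left
      by_contra hcon
      simp only [Set.mem_iUnion, Set.mem_setOf_eq, not_exists] at hcon
      push_neg at hcon
      obtain ⟨g0, hg0T, hg0close⟩ := hTcover n (μh1 n ω) (hmono n ω) (fun t => hrange n ω t)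
      have hdevg0 := hcon g0 (Finset.mem_insert_of_mem hg0T)
      have hdevμs := hcon (μs n) (Finset.mem_insert_self _ _)
      -- abbreviations
      set LTf := (n1 n : ℝ)⁻¹ * ∑ i ∈ Finset.univ.filter (fun i => Z n ω i = true),
        (y1 n i - μh1 n ω (x n i)) ^ 2 with hLTf
      set LTg0 := (n1 n : ℝ)⁻¹ * ∑ i ∈ Finset.univ.filter (fun i => Z n ω i = true),
        (y1 n i - g0 (x n i)) ^ 2 with hLTg0
      set LTμ := (n1 n : ℝ)⁻¹ * ∑ i ∈ Finset.univ.filter (fun i => Z n ω i = true),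
        (y1 n i - μs n (x n i)) ^ 2 with hLTμ
      set Lf := (n : ℝ)⁻¹ * ∑ i, (y1 n i - μh1 n ω (x n i)) ^ 2 with hLf
      set Lg0 := (n : ℝ)⁻¹ * ∑ i, (y1 n i - g0 (x n i)) ^ 2 with hLg0
      set Lμ := (n : ℝ)⁻¹ * ∑ i, (y1 n i - μs n (x n i)) ^ 2 with hLμ
      clear_value LTf LTg0 LTμ Lf Lg0 Lμ
      -- population variational inequality and projection
      have hvar : ∑ i, (y1 n i - μs n (x n i)) * (μh1 n ω (x n i) - μs n (x n i)) ≤ 0 := by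
        apply var_ineq Finset.univ (fun i => y1 n i) (fun i => μs n (x n i))
          (fun i => μh1 n ω (x n i))
        intro t ht ht1
        exact hμsmin n (fun s => μs n s + t * (μh1 n ω s - μs n s))
          (combo_mono (hμsmono n) (hmono n ω) t ht.le ht1)
          (combo_range (hμsrange n) (fun s => hrange n ω s) t ht.le ht1)
      have hproj : ∑ i, (μh1 n ω (x n i) - μs n (x n i)) ^ 2
          ≤ ∑ i, (y1 n i - μh1 n ω (x n i)) ^ 2 - ∑ i, (y1 n i - μs n (x n i)) ^ 2 :=
        proj_ineq Finset.univ _ _ _ hvar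
      -- Lipschitz transfers
      have hsumabs : ∑ i, |μh1 n ω (x n i) - g0 (x n i)| ≤ (n : ℝ) * δ := by
        refine le_trans (sum_abs_le_sqrt hn0 _) ?_
        have h1 : Real.sqrt ((n : ℝ)⁻¹ * ∑ i, (μh1 n ω (x n i) - g0 (x n i)) ^ 2) ≤ δ :=
          hg0close
        exact mul_le_mul_of_nonneg_left h1 hnR.le
      have hg0range := hTrange n g0 hg0T
      have hLfg0 : |Lf - Lg0| ≤ 2 * B * δ := by
        have h1 : Lf - Lg0 = (n : ℝ)⁻¹ * (∑ i, (y1 n i - μh1 n ω (x n i)) ^ 2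
            - ∑ i, (y1 n i - g0 (x n i)) ^ 2) := by
          rw [hLf, hLg0]
          ring
        rw [h1, abs_mul, abs_of_nonneg (inv_nonneg.2 hnR.le)]
        have h2 := abs_sum_sq_diff Finset.univ (y1 n) (fun i => μh1 n ω (x n i))
          (fun i => g0 (x n i)) B hB0.le (fun i _ => habsf ω i) (fun i _ => habs g0 hg0range i)
        calc (n : ℝ)⁻¹ * |∑ i, (y1 n i - μh1 n ω (x n i)) ^ 2
              - ∑ i, (y1 n i - g0 (x n i)) ^ 2|
            ≤ (n : ℝ)⁻¹ * (2 * B * ∑ i, |μh1 n ω (x n i) - g0 (x n i)|) := by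
              apply mul_le_mul_of_nonneg_left h2 (by positivity)
          _ ≤ (n : ℝ)⁻¹ * (2 * B * ((n : ℝ) * δ)) := by
              apply mul_le_mul_of_nonneg_left _ (by positivity)
              apply mul_le_mul_of_nonneg_left hsumabs (by positivity)
          _ = 2 * B * δ := by
              field_simp
      have hLTfg0 : |LTf - LTg0| ≤ 2 * B * ((n : ℝ) / (n1 n : ℝ)) * δ := by
        have h1 : LTf - LTg0 = (n1 n : ℝ)⁻¹ * (∑ i ∈ Finset.univ.filter
              (fun i => Z n ω i = true), (y1 n i - μh1 n ω (x n i)) ^ 2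
            - ∑ i ∈ Finset.univ.filter (fun i => Z n ω i = true),
              (y1 n i - g0 (x n i)) ^ 2) := by
          rw [hLTf, hLTg0]
          ring
        rw [h1, abs_mul, abs_of_nonneg (inv_nonneg.2 hn1R.le)]
        have h2 := abs_sum_sq_diff (Finset.univ.filter (fun i => Z n ω i = true)) (y1 n)
          (fun i => μh1 n ω (x n i)) (fun i => g0 (x n i)) B hB0.le
          (fun i _ => habsf ω i) (fun i _ => habs g0 hg0range i)
        have h3 : ∑ i ∈ Finset.univ.filter (fun i => Z n ω i = true),
            |μh1 n ω (x n i) - g0 (x n i)| ≤ ∑ i, |μh1 n ω (x n i) - g0 (x n i)| := by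
          apply Finset.sum_le_sum_of_subset_of_nonneg (Finset.subset_univ _)
          intro i _ _
          exact abs_nonneg _
        calc (n1 n : ℝ)⁻¹ * |∑ i ∈ Finset.univ.filter (fun i => Z n ω i = true),
              (y1 n i - μh1 n ω (x n i)) ^ 2 - ∑ i ∈ Finset.univ.filter
              (fun i => Z n ω i = true), (y1 n i - g0 (x n i)) ^ 2|
            ≤ (n1 n : ℝ)⁻¹ * (2 * B * ((n : ℝ) * δ)) := by
              apply mul_le_mul_of_nonneg_left _ (by positivity)
              refine le_trans h2 ?_
              apply mul_le_mul_of_nonneg_left (le_trans h3 hsumabs) (by positivity)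
          _ = 2 * B * ((n : ℝ) / (n1 n : ℝ)) * δ := by
              field_simp
      have hLTmin : LTf ≤ LTμ := by
        rw [hLTf, hLTμ]
        exact hmin n ω (μs n) (hμsmono n) (hμsrange n)
      -- combine
      have hq : 2 * B * ((n : ℝ) / (n1 n : ℝ)) * δ ≤ 2 * B * (1 / pmin) * δ := by
        apply mul_le_mul_of_nonneg_right _ hδ0.le
        apply mul_le_mul_of_nonneg_left hn_n1 (by positivity)
      have hchain : Lf - Lμ < ε ^ 2 := by
        have e1 : Lf - Lμ = (Lf - Lg0) + (Lg0 - LTg0) + (LTg0 - LTf)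
            + (LTf - LTμ) + (LTμ - Lμ) := by ring
        have t1 : Lf - Lg0 ≤ 2 * B * δ := le_trans (le_abs_self _) hLfg0
        have t2 : Lg0 - LTg0 < ε' := by
          have := hdevg0
          have h4 : Lg0 - LTg0 ≤ |LTg0 - Lg0| := by
            rw [abs_sub_comm]
            exact le_abs_self _
          calc Lg0 - LTg0 ≤ |LTg0 - Lg0| := h4
            _ < ε' := this
        have t3 : LTg0 - LTf ≤ 2 * B * ((n : ℝ) / (n1 n : ℝ)) * δ := by
          have h4 : LTg0 - LTf ≤ |LTf - LTg0| := by
            rw [abs_sub_comm]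
            exact le_abs_self _
          exact le_trans h4 hLTfg0
        have t4 : LTf - LTμ ≤ 0 := by linarith
        have t5 : LTμ - Lμ < ε' := lt_of_le_of_lt (le_abs_self _) hdevμs
        have t2' : Lg0 - LTg0 < ε' := t2
        have hCLδ2 : 2 * B * δ + 2 * B * ((n : ℝ) / (n1 n : ℝ)) * δ ≤ CL * δ := by
          have hexp : CL * δ = 2 * B * δ + 2 * B * (1 / pmin) * δ := by
            rw [hCL]
            ring
          rw [hexp]
          linarith [hq]
        have hε2pos : (0:ℝ) < ε ^ 2 := by positivity
        have hfin : Lf - Lμ < CL * δ + 2 * ε' := by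
          rw [e1]
          linarith
        have h2ε' : CL * δ + 2 * ε' ≤ ε ^ 2 / 4 + ε ^ 2 / 2 := by
          rw [hε']
          linarith [hδCL]
        linarith
      have hdist2 : (distN x n (μh1 n ω) (μs n)) ^ 2 ≤ Lf - Lμ := by
        have harg : (0:ℝ) ≤ (n : ℝ)⁻¹ * ∑ i, (μh1 n ω (x n i) - μs n (x n i)) ^ 2 := by
          positivity
        have h1 : (distN x n (μh1 n ω) (μs n)) ^ 2
            = (n : ℝ)⁻¹ * ∑ i, (μh1 n ω (x n i) - μs n (x n i)) ^ 2 := by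
          unfold distN
          exact Real.sq_sqrt harg
        rw [h1, hLf, hLμ]
        calc (n : ℝ)⁻¹ * ∑ i, (μh1 n ω (x n i) - μs n (x n i)) ^ 2
            ≤ (n : ℝ)⁻¹ * (∑ i, (y1 n i - μh1 n ω (x n i)) ^ 2
              - ∑ i, (y1 n i - μs n (x n i)) ^ 2) :=
              mul_le_mul_of_nonneg_left hproj (by positivity)
          _ = (n : ℝ)⁻¹ * ∑ i, (y1 n i - μh1 n ω (x n i)) ^ 2
              - (n : ℝ)⁻¹ * ∑ i, (y1 n i - μs n (x n i)) ^ 2 := by ring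
      have hεd2 : ε ^ 2 ≤ (distN x n (μh1 n ω) (μs n)) ^ 2 := pow_le_pow_left₀ hε.le hωd 2
      linarith
    -- measure bound
    have hA : P (⋃ g ∈ insert (μs n) (T n), {ω | ε' ≤ |(n1 n : ℝ)⁻¹ * (∑ i ∈
          Finset.univ.filter (fun i => Z n ω i = true), (y1 n i - g (x n i)) ^ 2)
        - (n : ℝ)⁻¹ * ∑ i, (y1 n i - g (x n i)) ^ 2|})
        ≤ ENNReal.ofReal (C / n) := by
      refine le_trans (measure_biUnion_finset_le _ _) ?_
      have hterm : ∀ g ∈ insert (μs n) (T n),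
          P {ω | ε' ≤ |(n1 n : ℝ)⁻¹ * (∑ i ∈ Finset.univ.filter
              (fun i => Z n ω i = true), (y1 n i - g (x n i)) ^ 2)
            - (n : ℝ)⁻¹ * ∑ i, (y1 n i - g (x n i)) ^ 2|}
          ≤ ENNReal.ofReal ((B ^ 2) ^ 2 / (n1 n * ε' ^ 2)) := by
        intro g hg
        have hrangeg : ∀ i, |y1 n i - g (x n i)| ≤ B := by
          rcases Finset.mem_insert.1 hg with h | h
          · intro i
            rw [h]
            exact habsμs i
          · exact habs g (hTrange n g h)
        refine cheb_measure P Z n1 hCRD n hn0 hn1pos hn1len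
          (fun i => (y1 n i - g (x n i)) ^ 2) (B ^ 2) ?_ ε' hε'0
        intro i
        constructor
        · positivity
        · show (y1 n i - g (x n i)) ^ 2 ≤ B ^ 2
          rw [← sq_abs]
          apply pow_le_pow_left₀ (abs_nonneg _) (hrangeg i)
      refine le_trans (Finset.sum_le_sum hterm) ?_
      rw [Finset.sum_const, nsmul_eq_mul]
      have hcardle : (((insert (μs n) (T n)).card : ℕ) : ℝ≥0∞) ≤ ((Ncard : ℕ) : ℝ≥0∞) + 1 := by
        have h6 : (insert (μs n) (T n)).card ≤ (T n).card + 1 := Finset.card_insert_le _ _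
        have h7 : (insert (μs n) (T n)).card ≤ Ncard + 1 :=
          le_trans h6 (Nat.add_le_add_right (hTcard n) 1)
        exact_mod_cast h7
      calc ((insert (μs n) (T n)).card : ℝ≥0∞) * ENNReal.ofReal ((B ^ 2) ^ 2 / (n1 n * ε' ^ 2))
          ≤ (((Ncard : ℕ) : ℝ≥0∞) + 1) * ENNReal.ofReal ((B ^ 2) ^ 2 / (n1 n * ε' ^ 2)) :=
            mul_le_mul_left hcardle _
        _ ≤ ENNReal.ofReal (C / n) := by
            have h8 : (((Ncard : ℕ) : ℝ≥0∞) + 1) = ENNReal.ofReal ((Ncard : ℝ) + 1) := by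
              rw [ENNReal.ofReal_add (by positivity) zero_le_one, ENNReal.ofReal_natCast,
                ENNReal.ofReal_one]
            rw [h8, ← ENNReal.ofReal_mul (by positivity)]
            apply ENNReal.ofReal_le_ofReal
            have h9 : (B ^ 2) ^ 2 / ((n1 n : ℝ) * ε' ^ 2)
                ≤ (B ^ 2) ^ 2 / ((pmin * n) * ε' ^ 2) := by
              gcongr
            calc ((Ncard : ℝ) + 1) * ((B ^ 2) ^ 2 / ((n1 n : ℝ) * ε' ^ 2))
                ≤ ((Ncard : ℝ) + 1) * ((B ^ 2) ^ 2 / ((pmin * n) * ε' ^ 2)) :=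
                  mul_le_mul_of_nonneg_left h9 (by positivity)
              _ = C / n := by
                  rw [hC]
                  field_simp
    calc P {ω | ε ≤ |distN x n (μh1 n ω) (μs n)|}
        ≤ P ((⋃ g ∈ insert (μs n) (T n), {ω | ε' ≤ |(n1 n : ℝ)⁻¹ * (∑ i ∈
              Finset.univ.filter (fun i => Z n ω i = true), (y1 n i - g (x n i)) ^ 2)
            - (n : ℝ)⁻¹ * ∑ i, (y1 n i - g (x n i)) ^ 2|})
            ∪ {ω | ones (Z n ω) = n1 n}ᶜ) := measure_mono hincl
      _ ≤ P (⋃ g ∈ insert (μs n) (T n), {ω | ε' ≤ |(n1 n : ℝ)⁻¹ * (∑ i ∈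
              Finset.univ.filter (fun i => Z n ω i = true), (y1 n i - g (x n i)) ^ 2)
            - (n : ℝ)⁻¹ * ∑ i, (y1 n i - g (x n i)) ^ 2|})
            + P ({ω | ones (Z n ω) = n1 n}ᶜ) := measure_union_le _ _
      _ = P (⋃ g ∈ insert (μs n) (T n), {ω | ε' ≤ |(n1 n : ℝ)⁻¹ * (∑ i ∈
              Finset.univ.filter (fun i => Z n ω i = true), (y1 n i - g (x n i)) ^ 2)
            - (n : ℝ)⁻¹ * ∑ i, (y1 n i - g (x n i)) ^ 2|}) := by
          rw [ones_compl_zero P Z n1 hCRD n, add_zero]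
      _ ≤ ENNReal.ofReal (C / n) := hA
  have htend : Tendsto (fun n : ℕ => ENNReal.ofReal (C / n)) atTop (nhds 0) := by
    have h1 := tendsto_const_div_atTop_nhds_zero_nat C
    have h2 := ENNReal.tendsto_ofReal h1
    simpa using h2
  apply tendsto_of_tendsto_of_tendsto_of_le_of_le' tendsto_const_nhds htend
  · filter_upwards with n
    exact zero_le
  · filter_upwards [eventually_ge_atTop 1] with n hn
    exact hbound n hn

end IsoAux

/-- **Theorem (Isotonic regression).**
With a real-valued covariate and outcomes in `[a,b]`, the isotonic regression fit on the
treated arm is prediction unbiased, stable, and has typically simple realizations. -/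
theorem isotonic_regression_satisfies_conditions
    {Ω : Type} [MeasurableSpace Ω] (P : Measure Ω) [IsProbabilityMeasure P]
    (Z : (n : ℕ) → Ω → Fin n → Bool) (n1 : ℕ → ℕ)
    (pmin pmax : ℝ) (hpmin : 0 < pmin) (hpmax : pmax < 1)
    (hp : ∀ n : ℕ, 0 < n → pmin ≤ (n1 n : ℝ) / n ∧ (n1 n : ℝ) / n ≤ pmax)
    (hCRD : IsCRD P Z n1)
    (x : (n : ℕ) → Fin n → ℝ) (y1 : (n : ℕ) → Fin n → ℝ)
    (a b : ℝ) (hab : a ≤ b)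
    -- bounded outcomes
    (hy : ∀ n i, y1 n i ∈ Set.Icc a b)
    -- μ̂₁ₙ is an isotonic regression fit on the treated arm:
    -- a nondecreasing function into [a,b] minimizing the treated-arm squared error
    (μh1 : (n : ℕ) → Ω → ℝ → ℝ)
    (hmono : ∀ n ω, Monotone (μh1 n ω))
    (hrange : ∀ n ω s, μh1 n ω s ∈ Set.Icc a b)
    (hmin : ∀ n ω, ∀ μ : ℝ → ℝ, Monotone μ → (∀ s, μ s ∈ Set.Icc a b) →
      (n1 n : ℝ)⁻¹ * ∑ i ∈ Finset.univ.filter (fun i => Z n ω i = true),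
        (y1 n i - μh1 n ω (x n i)) ^ 2
      ≤ (n1 n : ℝ)⁻¹ * ∑ i ∈ Finset.univ.filter (fun i => Z n ω i = true),
        (y1 n i - μ (x n i)) ^ 2)
    (hmeas : ∀ n i, Measurable (fun ω => μh1 n ω (x n i))) :
    -- conclusions: prediction unbiasedness, stability, typically simple realizations
    (∀ n : ℕ, P {ω |
      (n1 n : ℝ)⁻¹ * ∑ i ∈ Finset.univ.filter (fun i => Z n ω i = true), μh1 n ω (x n i)
      = (n1 n : ℝ)⁻¹ * ∑ i ∈ Finset.univ.filter (fun i => Z n ω i = true), y1 n i} = 1) ∧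
    (∃ μs : (n : ℕ) → ℝ → ℝ,
      TendstoInProb P (fun n ω => distN x n (μh1 n ω) (μs n))) ∧
    (∃ F : (n : ℕ) → Set (ℝ → ℝ),
      Tendsto (fun n => P {ω | μh1 n ω ∈ F n}) atTop (nhds 1) ∧
      ∫⁻ s in Set.Ioc (0 : ℝ) 1,
        ⨆ n : ℕ, sqrtLog (coveringNumber (F n) (distN x n) s) ≠ ⊤) := by
  classical
  refine ⟨?_, ?_, ?_⟩
  · -- prediction unbiasedness
    intro n
    have huniv : {ω |
        (n1 n : ℝ)⁻¹ * ∑ i ∈ Finset.univ.filter (fun i => Z n ω i = true), μh1 n ω (x n i)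
        = (n1 n : ℝ)⁻¹ * ∑ i ∈ Finset.univ.filter (fun i => Z n ω i = true), y1 n i}
        = Set.univ := by
      apply Set.eq_univ_iff_forall.2
      intro ω
      show (n1 n : ℝ)⁻¹ * ∑ i ∈ Finset.univ.filter (fun i => Z n ω i = true), μh1 n ω (x n i)
        = (n1 n : ℝ)⁻¹ * ∑ i ∈ Finset.univ.filter (fun i => Z n ω i = true), y1 n i
      rcases Nat.eq_zero_or_pos (n1 n) with h0 | hpos
      · rw [h0]
        simp
      · have hinv : (0:ℝ) < (n1 n : ℝ)⁻¹ := by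
          apply inv_pos.2
          exact_mod_cast hpos
        have hsum : ∑ i ∈ Finset.univ.filter (fun i => Z n ω i = true), μh1 n ω (x n i)
            = ∑ i ∈ Finset.univ.filter (fun i => Z n ω i = true), y1 n i := by
          apply IsoAux.pred_unbiased_core (Finset.univ.filter (fun i => Z n ω i = true))
            (x n) (y1 n) a b hab (μh1 n ω) (hmono n ω) (fun t => hrange n ω t)
            (fun i _ => hy n i)
          intro g hg hgr
          apply IsoAux.var_ineq
          intro t ht ht1
          have h2 := hmin n ω (fun s => μh1 n ω s + t * (g s - μh1 n ω s))
            (IsoAux.combo_mono (hmono n ω) hg t ht.le ht1)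
            (IsoAux.combo_range (fun s => hrange n ω s) hgr t ht.le ht1)
          exact (mul_le_mul_iff_right₀ hinv).1 h2
        rw [hsum]
    rw [huniv, measure_univ]
  · exact IsoAux.conclusion2 P Z n1 pmin pmax hpmin hpmax hp hCRD x y1 a b hab hy μh1
      hmono hrange hmin
  · refine ⟨fun _ => {f : ℝ → ℝ | Monotone f ∧ ∀ t : ℝ, f t ∈ Set.Icc a b}, ?_, ?_⟩
    · have h1 : (fun n => P {ω | μh1 n ω ∈
          {f : ℝ → ℝ | Monotone f ∧ ∀ t : ℝ, f t ∈ Set.Icc a b}}) = fun _ => (1 : ℝ≥0∞) := by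
        funext n
        have h2 : {ω | μh1 n ω ∈ {f : ℝ → ℝ | Monotone f ∧ ∀ t : ℝ, f t ∈ Set.Icc a b}}
            = Set.univ :=
          Set.eq_univ_iff_forall.2 (fun ω => ⟨hmono n ω, fun t => hrange n ω t⟩)
        rw [h2, measure_univ]
      rw [h1]
      exact tendsto_const_nhds
    · exact IsoAux.conclusion3_integral x a b hab
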